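/- arXiv:1504.01895 — 4 statements merged into one kernel-verified Lean document; each statement's English description precedes it below -/
import Mathlib

section
/- Let A be an algebraic heart of a bounded t-structure of a triangulated category D, with simple objects S₁,…,Sₙ, which can be tilted indefinitely. Then in any green sequence of A one tilts at each indecomposable object of A at most once. -/
open CategoryTheory Limits Pretriangulated

universe v u

namespace GreenSeqPaper

/-! ## Hearts of bounded t-structures, simple tilts, green sequences

We formalize hearts of bounded t-structures of a (pre)triangulated category `D`
concretely, as sets of objects `H : Set D` satisfying Bridgeland's
characterization: negative self-Homs vanish and every object of `D` is a finite
extension of shifts of objects of `H`.  Short exact sequences in the heart are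
exactly the distinguished triangles with all three vertices in the heart. -/


variable {D : Type u} [Category.{v} D] [Preadditive D] [Limits.HasZeroObject D]
  [HasShift D ℤ] [∀ n : ℤ, (CategoryTheory.shiftFunctor D n).Additive] [Pretriangulated D]

/-- The set of objects isomorphic to an `n`-fold shift of an object of `H`. -/
def shiftSet (H : Set D) (n : ℤ) : Set D := { X | ∃ Y ∈ H, Nonempty (X ≅ Y⟦n⟧) }

/-- `E` is an extension of `B` by `A`: there is a distinguished triangle
`A ⟶ E ⟶ B ⟶ A⟦1⟧`.  When `A`, `E`, `B` all lie in the heart of a t-structure,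
this says exactly that `0 ⟶ A ⟶ E ⟶ B ⟶ 0` is a short exact sequence in the heart. -/
def IsExt (A E B : D) : Prop :=
  ∃ (f : A ⟶ E) (g : E ⟶ B) (h : B ⟶ A⟦(1 : ℤ)⟧), Triangle.mk f g h ∈ distTriang D

/-- The objects of `D` generated from `H` by shifts and finitely many extensions. -/
inductive GeneratedBy (H : Set D) : D → Prop
  | zero {E : D} : IsZero E → GeneratedBy H E
  | shift {Y : D} (hY : Y ∈ H) (n : ℤ) {E : D} : Nonempty (E ≅ Y⟦n⟧) → GeneratedBy H E
  | ext {A E B : D} : GeneratedBy H A → GeneratedBy H B → IsExt A E B → GeneratedBy H E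

/-- `H` is (the set of objects of) the heart of a bounded t-structure on `D`
(Bridgeland's characterization of hearts of bounded t-structures). -/
structure IsHeart (H : Set D) : Prop where
  isoClosed : ∀ {X Y : D}, X ∈ H → (X ≅ Y) → Y ∈ H
  zero_mem : ∀ {X : D}, IsZero X → X ∈ H
  negHom : ∀ X ∈ H, ∀ Y ∈ H, ∀ n : ℤ, n < 0 → ∀ f : X ⟶ Y⟦n⟧, f = 0
  extClosed : ∀ {A E B : D}, A ∈ H → B ∈ H → IsExt A E B → E ∈ H
  generates : ∀ E : D, GeneratedBy H E

/-- A simple object of the abelian category `H`: it is nonzero and admits no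
short exact sequence `0 ⟶ A ⟶ S ⟶ B ⟶ 0` in `H` with both `A` and `B` nonzero. -/
def IsSimpleIn (H : Set D) (S : D) : Prop :=
  S ∈ H ∧ ¬ IsZero S ∧
    ∀ A B : D, A ∈ H → B ∈ H → IsExt A S B → IsZero A ∨ IsZero B

/-- `E ∈ H` has finite length: it admits a finite filtration with simple subquotients. -/
inductive FinLength (H : Set D) : D → Prop
  | zero {E : D} : IsZero E → FinLength H E
  | step {A E S : D} : A ∈ H → IsSimpleIn H S → IsExt A E S → FinLength H A → FinLength H E

/-- An algebraic heart: a heart of a bounded t-structure which has finite length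
and finitely many simple objects (up to isomorphism). -/
structure IsAlgebraicHeart (H : Set D) : Prop where
  heart : IsHeart H
  finLength : ∀ E ∈ H, FinLength H E
  finSimples : ∃ (n : ℕ) (f : Fin n → D), ∀ S : D, IsSimpleIn H S → ∃ i, Nonempty (S ≅ f i)

/-- `H` has exactly `n` simple objects up to isomorphism. -/
def HasNSimples (H : Set D) (n : ℕ) : Prop :=
  ∃ f : Fin n → D, (∀ i, IsSimpleIn H (f i)) ∧ (∀ i j, Nonempty (f i ≅ f j) → i = j) ∧
    ∀ S : D, IsSimpleIn H S → ∃ i, Nonempty (S ≅ f i)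

/-- A torsion pair `(T, F)` in the heart `H`. -/
structure IsTorsionPair (H T F : Set D) : Prop where
  subsetT : T ⊆ H
  subsetF : F ⊆ H
  isoClosedT : ∀ {X Y : D}, X ∈ T → (X ≅ Y) → Y ∈ T
  isoClosedF : ∀ {X Y : D}, X ∈ F → (X ≅ Y) → Y ∈ F
  hom_zero : ∀ t ∈ T, ∀ f ∈ F, ∀ φ : t ⟶ f, φ = 0
  ses : ∀ E ∈ H, ∃ t ∈ T, ∃ b ∈ F, IsExt t E b

/-- A torsion class in the heart `H`. -/
def IsTorsionClass (H T : Set D) : Prop := ∃ F, IsTorsionPair H T F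

/-- The Gabriel product `C₁ ⋆ C₂`: objects `E` admitting a short exact sequence
`0 ⟶ C₁ ⟶ E ⟶ C₂ ⟶ 0` with `Cᵢ ∈ 𝒞ᵢ`. -/
def gabriel (C₁ C₂ : Set D) : Set D := { E | ∃ A ∈ C₁, ∃ B ∈ C₂, IsExt A E B }

/-- The (left) tilt `⟨F, T[-1]⟩` of a heart with respect to a torsion pair `(T, F)`:
objects `E` with a distinguished triangle `f ⟶ E ⟶ t⟦-1⟧ ⟶ f⟦1⟧`, `f ∈ F`, `t ∈ T`;
equivalently (in terms of the cohomology objects `Hⁱ` with respect to the given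
t-structure) the objects `E` with `Hⁱ E = 0` for `i ∉ {0,1}`, `H⁰ E ∈ F`, `H¹ E ∈ T`. -/
def tilted (T F : Set D) : Set D := gabriel F (shiftSet T (-1))

/-- The extension closure `⟨S⟩` of a single object `S`. -/
inductive extGen (S : D) : D → Prop
  | zero {E : D} : IsZero E → extGen S E
  | of {E : D} : Nonempty (E ≅ S) → extGen S E
  | ext {A E B : D} : extGen S A → extGen S B → IsExt A E B → extGen S E

/-- The torsion-free class `{E ∈ H | Hom(S, E) = 0}` of the torsion pair `(⟨S⟩, F)`
associated to a simple object `S` of `H`. -/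
def torsionFreeOf (H : Set D) (S : D) : Set D := { E | E ∈ H ∧ ∀ f : S ⟶ E, f = 0 }

/-- The simple (left) tilt of the heart `H` at a simple object `S`. -/
def simpleTilt (H : Set D) (S : D) : Set D := tilted (setOf (extGen S)) (torsionFreeOf H S)

/-- The hearts obtained from `A` by finite sequences of simple tilts. -/
inductive Reachable (A : Set D) : Set D → Prop
  | refl : Reachable A A
  | tilt {H : Set D} {S : D} : Reachable A H → IsSimpleIn H S → Reachable A (simpleTilt H S)

/-- `A` can be tilted indefinitely: every heart obtained from `A` by a finite
sequence of simple tilts is again an algebraic heart with `n` simple objects. -/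
def TiltsIndefinitely (A : Set D) (n : ℕ) : Prop :=
  ∀ H : Set D, Reachable A H →
    IsHeart H ∧ (∀ E ∈ H, FinLength H E) ∧ HasNSimples H n

/-- A green sequence of the heart `A` of length `k`: a sequence of `k` simple
tilts starting at `A`, in which we strictly tilt at (simple) objects lying in `A`. -/
structure GreenSeq (A : Set D) (k : ℕ) where
  hearts : Fin (k + 1) → Set D
  simples : Fin k → D
  init : hearts 0 = A
  simple : ∀ i : Fin k, IsSimpleIn (hearts i.castSucc) (simples i)
  strict : ∀ i : Fin k, simples i ∈ A
  tilt : ∀ i : Fin k, hearts i.succ = simpleTilt (hearts i.castSucc) (simples i)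

/-- A green sequence is maximal if its last heart is the shifted heart `A[-1]`. -/
def GreenSeq.IsMaximal {A : Set D} {k : ℕ} (G : GreenSeq A k) : Prop :=
  G.hearts (Fin.last k) = shiftSet A (-1)

/-- An object `E` of the heart `H` is endo-trivial if `Hom_H(E,E)` is a skew field,
i.e. `E` is nonzero and every nonzero endomorphism of `E` is invertible. -/
def EndoTrivial (E : D) : Prop :=
  ¬ IsZero E ∧ ∀ f : E ⟶ E, f ≠ 0 → IsIso f

/-- `HasClass Sm E v`: the object `E` has class `v = ∑ vᵢ [Sm i]` in the
Grothendieck group of the heart, computed via a composition series with simple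
factors among the `Sm i`. -/
inductive HasClass {n : ℕ} (Sm : Fin n → D) : D → (Fin n → ℤ) → Prop
  | zero {E : D} : IsZero E → HasClass Sm E 0
  | step {A E : D} {i : Fin n} {v : Fin n → ℤ} :
      HasClass Sm A v → IsExt A E (Sm i) → HasClass Sm E (v + Pi.single i 1)


/-! ### Auxiliary machinery for the proof

We introduce the "non-positive co-aisle closure" `GeGen H` of a heart `H`:
objects generated by non-positive shifts of objects of `H` under extensions
(in cohomological terms, `D^{≥0}` for the t-structure with heart `H`).
A left tilt of `H` is contained in `GeGen H`, so all hearts appearing later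
in a green sequence are contained in `GeGen` of any earlier one.  On the other
hand positive shifts of objects of `H` admit no nonzero maps to `GeGen H`.
Since tilting at a simple `S` puts `S⟦-1⟧` in the new heart, `S` can never
belong to a later heart of the sequence, whence each tilting object occurs at
most once. -/

open ZeroObject

lemma IsExt.isoMid {A E E' B : D} (h : IsExt A E B) (e : E ≅ E') : IsExt A E' B := by
  obtain ⟨f, g, w, hT⟩ := h
  exact ⟨f ≫ e.hom, e.inv ≫ g, w, isomorphic_distinguished _ hT _
    (Triangle.isoMk _ _ (Iso.refl _) e.symm (Iso.refl _) (by show (f ≫ e.hom) ≫ e.inv = 𝟙 A ≫ f; simp)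
      (by show (e.inv ≫ g) ≫ 𝟙 B = e.inv ≫ g; simp)
      (by show w ≫ (shiftFunctor D (1 : ℤ)).map (𝟙 A) = 𝟙 B ≫ w; simp))⟩

lemma IsExt.shift {A E B : D} (h : IsExt A E B) (n : ℤ) : IsExt (A⟦n⟧) (E⟦n⟧) (B⟦n⟧) := by
  obtain ⟨f, g, w, hT⟩ := h
  exact ⟨_, _, _, Triangle.shift_distinguished _ hT n⟩

/-- The objects generated by non-positive shifts of objects of `H` under
extensions: this is `D^{≥0}` for the t-structure with heart `H`. -/
inductive GeGen (H : Set D) : D → Prop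
  | zero {E : D} : IsZero E → GeGen H E
  | shift {Y : D} (hY : Y ∈ H) (n : ℤ) (hn : n ≤ 0) {E : D} :
      Nonempty (E ≅ Y⟦n⟧) → GeGen H E
  | ext {A E B : D} : GeGen H A → GeGen H B → IsExt A E B → GeGen H E

lemma GeGen.ofIso {H : Set D} {Y E : D} (hY : GeGen H Y) (e : Y ≅ E) : GeGen H E := by
  induction hY generalizing E with
  | zero h => exact .zero (h.of_iso e.symm)
  | shift hZ n hn h => exact .shift hZ n hn ⟨e.symm ≪≫ h.some⟩
  | ext hA hB hext ihA ihB => exact .ext hA hB (hext.isoMid e)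

lemma GeGen.mem {H : Set D} {Y : D} (hY : Y ∈ H) : GeGen H Y :=
  .shift hY 0 le_rfl ⟨((shiftFunctorZero D ℤ).app Y).symm⟩

lemma GeGen.shiftLe {H : Set D} {Y : D} (hY : GeGen H Y) (n : ℤ) (hn : n ≤ 0) :
    GeGen H (Y⟦n⟧) := by
  induction hY with
  | zero h => exact .zero ((shiftFunctor D n).map_isZero h)
  | @shift Z hZ k hk E h =>
      refine .shift hZ (k + n) (by omega) ⟨?_⟩
      exact (shiftFunctor D n).mapIso h.some ≪≫
        ((shiftFunctorAdd' D k n (k + n) rfl).app Z).symm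
  | ext hA hB hext ihA ihB => exact .ext ihA ihB (hext.shift n)

lemma GeGen.trans {H H' : Set D} (h : ∀ E ∈ H', GeGen H E) {Y : D}
    (hY : GeGen H' Y) : GeGen H Y := by
  induction hY with
  | zero h0 => exact .zero h0
  | shift hZ n hn e => exact (((h _ hZ).shiftLe n hn).ofIso e.some.symm)
  | ext hA hB hext ihA ihB => exact .ext ihA ihB hext

lemma extGen_mem_heart {H : Set D} (hH : IsHeart H) {S : D} (hS : S ∈ H) {t : D}
    (ht : extGen S t) : t ∈ H := by
  induction ht with
  | zero h => exact hH.zero_mem h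
  | of h => exact hH.isoClosed hS h.some.symm
  | ext hA hB hext ihA ihB => exact hH.extClosed ihA ihB hext

lemma simpleTilt_subset_GeGen {H : Set D} (hH : IsHeart H) {S : D} (hS : S ∈ H) :
    ∀ E ∈ simpleTilt H S, GeGen H E := by
  rintro E ⟨f, hf, t', ⟨t, ht, ⟨e⟩⟩, hext⟩
  refine .ext (GeGen.mem hf.1) ?_ hext
  exact ((GeGen.mem (extGen_mem_heart hH hS ht)).shiftLe (-1) (by omega)).ofIso e.symm

lemma shift_neg_one_mem_simpleTilt {H : Set D} (hH : IsHeart H) (S : D) :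
    S⟦(-1 : ℤ)⟧ ∈ simpleTilt H S := by
  refine ⟨0, ⟨hH.zero_mem (isZero_zero D), fun f => (isZero_zero D).eq_of_tgt f 0⟩,
    S⟦(-1 : ℤ)⟧, ⟨S, .of ⟨Iso.refl S⟩, ⟨Iso.refl _⟩⟩, ?_⟩
  exact ⟨0, 𝟙 _, 0, contractible_distinguished₁ _⟩

/-- Positive shifts of objects of the heart `H` admit no nonzero maps to
objects of `GeGen H`. -/
lemma hom_zero_of_GeGen {H : Set D} (hH : IsHeart H) {T : D} (hT : T ∈ H) {m : ℤ}
    (hm : 1 ≤ m) {Y : D} (hY : GeGen H Y) : ∀ f : T⟦m⟧ ⟶ Y, f = 0 := by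
  induction hY with
  | zero h => exact fun f => h.eq_of_tgt f 0
  | @shift Z hZ n hn E h =>
      intro f
      obtain ⟨e⟩ := h
      have hg : (f ≫ e.hom) = 0 := by
        apply (shiftFunctor D (-m)).map_injective
        have h' : (shiftFunctorCompIsoId D m (-m) (by ring)).inv.app T ≫
            (shiftFunctor D (-m)).map (f ≫ e.hom) ≫
            (shiftFunctorAdd' D n (-m) (n - m) (by ring)).inv.app Z = 0 :=
          hH.negHom T hT Z hZ (n - m) (by omega) _
        have h2 : (shiftFunctor D (-m)).map (f ≫ e.hom) =
            (shiftFunctorCompIsoId D m (-m) (by ring)).hom.app T ≫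
            ((shiftFunctorCompIsoId D m (-m) (by ring)).inv.app T ≫
            (shiftFunctor D (-m)).map (f ≫ e.hom) ≫
            (shiftFunctorAdd' D n (-m) (n - m) (by ring)).inv.app Z) ≫
            (shiftFunctorAdd' D n (-m) (n - m) (by ring)).hom.app Z := by simp
        rw [Functor.map_zero, h2, h', zero_comp, comp_zero]
      calc f = (f ≫ e.hom) ≫ e.inv := by simp
        _ = 0 := by rw [hg, zero_comp]
  | @ext A E B hA hB hext ihA ihB =>
      intro f
      obtain ⟨u, v, w, hTr⟩ := hext
      obtain ⟨g, hg⟩ := Triangle.coyoneda_exact₂ _ hTr f (ihB (f ≫ v))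
      rw [hg, ihA g]
      exact zero_comp

lemma GreenSeq.reachable {A : Set D} {k : ℕ} (G : GreenSeq A k) :
    ∀ (m : ℕ) (hm : m < k + 1), Reachable A (G.hearts ⟨m, hm⟩) := by
  intro m
  induction m with
  | zero => intro _; rw [show (⟨0, by omega⟩ : Fin (k + 1)) = 0 from rfl, G.init]
            exact .refl
  | succ b ih =>
      intro hm
      have hb : b < k := by omega
      have := G.tilt ⟨b, hb⟩
      rw [show (⟨b + 1, hm⟩ : Fin (k + 1)) = (⟨b, hb⟩ : Fin k).succ from rfl, this]
      exact .tilt (ih (by omega)) (G.simple ⟨b, hb⟩)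

lemma GreenSeq.chain {A : Set D} {k : ℕ} (G : GreenSeq A k)
    (hH : ∀ m : Fin (k + 1), IsHeart (G.hearts m)) :
    ∀ (b : ℕ) (hb : b < k + 1) (a : ℕ) (hab : a ≤ b),
      ∀ E ∈ G.hearts ⟨b, hb⟩, GeGen (G.hearts ⟨a, by omega⟩) E := by
  intro b
  induction b with
  | zero =>
      intro hb a hab E hE
      obtain rfl : a = 0 := by omega
      exact GeGen.mem hE
  | succ c ih =>
      intro hb a hab E hE
      rcases Nat.eq_or_lt_of_le hab with rfl | hlt
      · exact GeGen.mem hE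
      · have hac : a ≤ c := by omega
        have hc : c < k := by omega
        have htilt := G.tilt ⟨c, hc⟩
        rw [show ((⟨c, hc⟩ : Fin k).succ) = (⟨c + 1, hb⟩ : Fin (k + 1)) from rfl] at htilt
        have hE' : GeGen (G.hearts ⟨c, by omega⟩) E := by
          refine simpleTilt_subset_GeGen (hH ⟨c, by omega⟩) ?_ E (htilt ▸ hE)
          exact (G.simple ⟨c, hc⟩).1
        exact GeGen.trans (fun E' hE' => ih (by omega) a hac E' hE') hE'

lemma green_seq_lt {A : Set D} (n : ℕ) (hTilt : TiltsIndefinitely A n)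
    {k : ℕ} (G : GreenSeq A k) (i j : Fin k) (hij : i < j)
    (e : G.simples i ≅ G.simples j) : False := by
  have hH : ∀ m : Fin (k + 1), IsHeart (G.hearts m) := fun m =>
    (hTilt _ (G.reachable m.1 m.2)).1
  -- the shifted simple `Sᵢ⟦-1⟧` lies in the heart right after the `i`-th tilt
  have h1 : (G.simples i)⟦(-1 : ℤ)⟧ ∈ G.hearts i.succ := by
    rw [G.tilt i]
    exact shift_neg_one_mem_simpleTilt (hH i.castSucc) (G.simples i)
  have h2 : (G.simples j)⟦(-1 : ℤ)⟧ ∈ G.hearts i.succ :=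
    (hH i.succ).isoClosed h1 ((shiftFunctor D (-1 : ℤ)).mapIso e)
  -- the heart at step `j` is contained in `GeGen` of the heart at step `i+1`
  have h3 : GeGen (G.hearts i.succ) (G.simples j) :=
    G.chain hH j.1 (Nat.lt_succ_of_lt j.isLt) (i.1 + 1) hij (G.simples j) (G.simple j).1
  -- hence `Sⱼ = (Sⱼ⟦-1⟧)⟦1⟧` admits no nonzero map to itself, so it is zero
  have h4 := hom_zero_of_GeGen (hH i.succ) h2 (le_refl (1 : ℤ)) h3
    ((shiftFunctorCompIsoId D (-1 : ℤ) (1 : ℤ) (by ring)).hom.app (G.simples j))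
  have h6 := ((shiftFunctorCompIsoId D (-1 : ℤ) (1 : ℤ) (by ring)).app
      (G.simples j)).inv_hom_id
  simp only [Iso.app_hom, Iso.app_inv] at h6
  rw [h4, comp_zero] at h6
  exact (G.simple j).2.1 ((Limits.IsZero.iff_id_eq_zero _).2 h6.symm)


/-- Let `A` be an algebraic heart of a bounded t-structure of a
triangulated category `D`, with simple objects `S₁, …, Sₙ`, which can be tilted
indefinitely.  Then in any green sequence of `A` one tilts at each indecomposable
object of `A` at most once (i.e. the tilting objects of a green sequence are
pairwise non-isomorphic). -/
theorem green_seq_tilts_at_most_once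
    (A : Set D) (n : ℕ) (hA : IsAlgebraicHeart A) (hn : HasNSimples A n)
    (hTilt : TiltsIndefinitely A n)
    (k : ℕ) (G : GreenSeq A k) :
    ∀ i j : Fin k, Nonempty (G.simples i ≅ G.simples j) → i = j := by
  intro i j ⟨e⟩
  rcases lt_trichotomy i j with h | h | h
  · exact absurd (green_seq_lt n hTilt G i j h e) (by simp)
  · exact h
  · exact absurd (green_seq_lt n hTilt G j i h e.symm) (by simp)

end GreenSeqPaper
end

section
/- Let A be an algebraic heart of a bounded t-structure of a triangulated category D, with simple objects S₁,…,Sₙ, which can be tilted indefinitely. Then in any maximal green sequence of A one tilts at all n simple objects S₁,…,Sₙ of A. -/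
open CategoryTheory Limits Pretriangulated

universe v u

namespace GreenSeqPaper

/-! ## Hearts of bounded t-structures, simple tilts, green sequences

We formalize hearts of bounded t-structures of a (pre)triangulated category `D`
concretely, as sets of objects `H : Set D` satisfying Bridgeland's
characterization: negative self-Homs vanish and every object of `D` is a finite
extension of shifts of objects of `H`.  Short exact sequences in the heart are
exactly the distinguished triangles with all three vertices in the heart. -/


variable {D : Type u} [Category.{v} D] [Preadditive D] [Limits.HasZeroObject D]
  [HasShift D ℤ] [∀ n : ℤ, (CategoryTheory.shiftFunctor D n).Additive] [Pretriangulated D]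

/-! ### Auxiliary lemmas for the proof of Statement 5 -/

section Aux

open ZeroObject

set_option linter.unusedSectionVars false

/-- Extract an `IsExt` from any distinguished triangle whose vertices are given up to
isomorphism. -/
lemma isExt_of_distTriang (T : Triangle D) (hT : T ∈ distTriang D)
    {A E B : D} (a : T.obj₁ ≅ A) (e : T.obj₂ ≅ E) (b : T.obj₃ ≅ B) : IsExt A E B := by
  refine ⟨a.inv ≫ T.mor₁ ≫ e.hom, e.inv ≫ T.mor₂ ≫ b.hom,
    b.inv ≫ T.mor₃ ≫ a.hom⟦(1 : ℤ)⟧', isomorphic_distinguished _ hT _ ?_⟩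
  refine Triangle.isoMk _ _ a.symm e.symm b.symm ?_ ?_ ?_
  · show (a.inv ≫ T.mor₁ ≫ e.hom) ≫ e.inv = a.inv ≫ T.mor₁
    simp
  · show (e.inv ≫ T.mor₂ ≫ b.hom) ≫ b.inv = e.inv ≫ T.mor₂
    simp
  · dsimp
    show (b.inv ≫ T.mor₃ ≫ (shiftFunctor D (1:ℤ)).map a.hom) ≫
      (shiftFunctor D (1:ℤ)).map a.inv = b.inv ≫ T.mor₃
    simp only [Category.assoc, ← Functor.map_comp, Iso.hom_inv_id]
    simp

/-- `IsExt` is invariant under isomorphisms in all three slots. -/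
lemma IsExt.of_iso {A E B A' E' B' : D} (h : IsExt A E B)
    (a : A ≅ A') (e : E ≅ E') (b : B ≅ B') : IsExt A' E' B' := by
  obtain ⟨f, g, w, mem⟩ := h
  exact isExt_of_distTriang _ mem a e b

/-- `IsExt` is stable under the shift `⟦1⟧`. -/
lemma IsExt.shift_one {A E B : D} (h : IsExt A E B) :
    IsExt (A⟦(1:ℤ)⟧) (E⟦(1:ℤ)⟧) (B⟦(1:ℤ)⟧) := by
  obtain ⟨f, g, w, mem⟩ := h
  exact isExt_of_distTriang _
    (rot_of_distTriang _ (rot_of_distTriang _ (rot_of_distTriang _ mem)))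
    (Iso.refl _) (Iso.refl _) (Iso.refl _)

lemma isZero_shift_iff (X : D) (n : ℤ) : IsZero (X⟦n⟧) ↔ IsZero X := by
  have h := Functor.map_eq_zero_iff (shiftFunctor D n) (f := 𝟙 X)
  rw [CategoryTheory.Functor.map_id] at h
  rw [IsZero.iff_id_eq_zero, IsZero.iff_id_eq_zero, ← h]

/-- The extension closure of an object of a heart is contained in the heart. -/
lemma extGen_mem_of_mem {H : Set D} (hH : IsHeart H) {T : D} (hT : T ∈ H)
    {t : D} (h : extGen T t) : t ∈ H := by
  induction h with
  | zero h => exact hH.zero_mem h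
  | of h => exact hH.isoClosed hT h.some.symm
  | ext _ _ hext ih₁ ih₂ => exact hH.extClosed ih₁ ih₂ hext

/-- Morphisms from an object of a heart to a negative shift of an object of the heart
vanish, where the target is only given up to isomorphism. -/
lemma hom_zero_of_iso_shift {H : Set D} (hH : IsHeart H) {X Y Z : D}
    (hX : X ∈ H) (hY : Y ∈ H) {n : ℤ} (hn : n < 0) (e : Z ≅ Y⟦n⟧) (φ : X ⟶ Z) : φ = 0 := by
  have h := hH.negHom X hX Y hY n hn (φ ≫ e.hom)
  have h2 : φ = (φ ≫ e.hom) ≫ e.inv := by simp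
  rw [h2, h, zero_comp]

/-- If a simple object `S` of a heart `A` is isomorphic to an object of the extension
closure of `T ∈ A`, then `S ≅ T`. -/
lemma iso_of_simple_iso_extGen {A : Set D} (hA : IsHeart A) {S T : D}
    (hS : IsSimpleIn A S) (hT : T ∈ A) {t : D} (ht : extGen T t) :
    Nonempty (S ≅ t) → Nonempty (S ≅ T) := by
  induction ht with
  | zero hz => exact fun ⟨e⟩ => absurd (hz.of_iso e) hS.2.1
  | of h => exact fun ⟨e⟩ => ⟨e ≪≫ h.some⟩
  | @ext t₁ t t₂ h₁ h₂ hext ih₁ ih₂ =>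
    rintro ⟨e⟩
    obtain ⟨f, g, w, mem⟩ := hext.of_iso (Iso.refl t₁) e.symm (Iso.refl t₂)
    rcases hS.2.2 t₁ t₂ (extGen_mem_of_mem hA hT h₁) (extGen_mem_of_mem hA hT h₂)
      ⟨f, g, w, mem⟩ with hz | hz
    · have : IsIso g := (Triangle.isZero₁_iff_isIso₂ _ mem).1 hz
      exact ih₂ ⟨asIso g⟩
    · have : IsIso f := (Triangle.isZero₃_iff_isIso₁ _ mem).1 hz
      exact ih₁ ⟨(asIso f).symm⟩

/-- Simplicity is stable under the shift `⟦-1⟧`. -/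
lemma isSimpleIn_shift_neg_one {A : Set D} {S : D} (hS : IsSimpleIn A S) :
    IsSimpleIn (shiftSet A (-1)) (S⟦(-1:ℤ)⟧) := by
  have comp : ∀ (W W' : D), (W ≅ W'⟦(-1:ℤ)⟧) → (W⟦(1:ℤ)⟧ ≅ W') := fun W W' e =>
    (shiftFunctor D (1:ℤ)).mapIso e ≪≫
      (shiftFunctorCompIsoId D (-1:ℤ) (1:ℤ) (by norm_num)).app W'
  refine ⟨⟨S, hS.1, ⟨Iso.refl _⟩⟩, fun h => hS.2.1 ((isZero_shift_iff S (-1)).1 h), ?_⟩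
  rintro U V ⟨U', hU', ⟨eu⟩⟩ ⟨V', hV', ⟨ev⟩⟩ hext
  have hext' : IsExt U' S V' :=
    hext.shift_one.of_iso (comp _ _ eu) (comp _ _ (Iso.refl (S⟦(-1:ℤ)⟧))) (comp _ _ ev)
  rcases hS.2.2 U' V' hU' hV' hext' with hz | hz
  · exact Or.inl (IsZero.of_iso ((isZero_shift_iff U' (-1)).2 hz) eu)
  · exact Or.inr (IsZero.of_iso ((isZero_shift_iff V' (-1)).2 hz) ev)

variable {A : Set D} {k : ℕ}

lemma GreenSeq.hearts_def (G : GreenSeq A k) {m : ℕ} (hm : m < k) :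
    G.hearts ⟨m + 1, by omega⟩ =
      simpleTilt (G.hearts ⟨m, by omega⟩) (G.simples ⟨m, hm⟩) :=
  G.tilt ⟨m, hm⟩

lemma GreenSeq.hearts_zero (G : GreenSeq A k) : G.hearts ⟨0, by omega⟩ = A := G.init

/-- Every heart in a green sequence contains the zero objects. -/
lemma GreenSeq.zero_mem_hearts (hA : IsHeart A) (G : GreenSeq A k) :
    ∀ m (hm : m ≤ k), (0 : D) ∈ G.hearts ⟨m, by omega⟩ := by
  intro m
  induction m with
  | zero =>
    intro _
    rw [G.hearts_zero]
    exact hA.zero_mem (isZero_zero D)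
  | succ m ih =>
    intro hm
    rw [G.hearts_def (by omega)]
    exact ⟨0, ⟨ih (by omega), fun φ => (isZero_zero D).eq_of_tgt φ 0⟩,
      0, ⟨0, extGen.zero (isZero_zero D),
        ⟨(isZero_zero D).iso ((isZero_shift_iff _ _).2 (isZero_zero D))⟩⟩,
      ⟨𝟙 0, 0, 0, contractible_distinguished 0⟩⟩

/-- Every heart in a green sequence is closed under isomorphisms. -/
lemma GreenSeq.hearts_isoClosed (hA : IsHeart A) (G : GreenSeq A k) :
    ∀ m (hm : m ≤ k) {X Y : D}, X ∈ G.hearts ⟨m, by omega⟩ → (X ≅ Y) →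
      Y ∈ G.hearts ⟨m, by omega⟩ := by
  intro m
  match m with
  | 0 =>
    intro _ X Y hX e
    rw [G.hearts_zero] at hX ⊢
    exact hA.isoClosed hX e
  | m + 1 =>
    intro hm X Y hX e
    rw [G.hearts_def (by omega)] at hX ⊢
    obtain ⟨c₁, h₁, c₂, h₂, hext⟩ := hX
    exact ⟨c₁, h₁, c₂, h₂, hext.of_iso (Iso.refl _) e (Iso.refl _)⟩

/-- Climbing up a green sequence: an object of a heart which has no morphisms from the
subsequent tilting objects belongs to all subsequent hearts. -/
lemma GreenSeq.up_chain (G : GreenSeq A k) (X : D) :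
    ∀ b (hb : b ≤ k) a (hab : a ≤ b), X ∈ G.hearts ⟨a, by omega⟩ →
      (∀ j (hj : j < k), a ≤ j → j < b → ∀ φ : G.simples ⟨j, hj⟩ ⟶ X, φ = 0) →
      X ∈ G.hearts ⟨b, by omega⟩ := by
  intro b
  induction b with
  | zero =>
    intro hb a hab hX _
    obtain rfl : a = 0 := by omega
    exact hX
  | succ b ih =>
    intro hb a hab hX hvan
    by_cases hcase : a = b + 1
    · subst hcase; exact hX
    · have hab' : a ≤ b := by omega
      have hXb : X ∈ G.hearts ⟨b, by omega⟩ :=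
        ih (by omega) a hab' hX (fun j hj h1 h2 φ => hvan j hj h1 (by omega) φ)
      rw [G.hearts_def (show b < k by omega)]
      exact ⟨X, ⟨hXb, fun φ => hvan b (by omega) hab' (by omega) φ⟩,
        0, ⟨0, extGen.zero (isZero_zero D),
          ⟨(isZero_zero D).iso ((isZero_shift_iff _ _).2 (isZero_zero D))⟩⟩,
        ⟨𝟙 X, 0, 0, contractible_distinguished X⟩⟩

/-- The descending engine: if `S⟦-1⟧` lies in the `m`-th heart of a green sequence and
has no morphisms from the tilting objects of the later tilts, then the sequence tilts
at an object isomorphic to `S`. -/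
lemma GreenSeq.down_engine (hA : IsHeart A) (G : GreenSeq A k) {S : D}
    (hS : IsSimpleIn A S)
    (hsimp : IsSimpleIn (G.hearts (Fin.last k)) (S⟦(-1:ℤ)⟧)) :
    ∀ m (hm : m ≤ k), S⟦(-1:ℤ)⟧ ∈ G.hearts ⟨m, by omega⟩ →
      (∀ j (hj : j < k), m ≤ j → ∀ φ : G.simples ⟨j, hj⟩ ⟶ S⟦(-1:ℤ)⟧, φ = 0) →
      ∃ j : Fin k, Nonempty (S ≅ G.simples j) := by
  intro m
  induction m with
  | zero =>
    intro hm hmem hvan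
    exfalso
    rw [G.hearts_zero] at hmem
    have h := hA.negHom _ hmem S hS.1 (-1) (by norm_num) (𝟙 (S⟦(-1:ℤ)⟧))
    exact hS.2.1 ((isZero_shift_iff S (-1)).1 ((IsZero.iff_id_eq_zero _).2 h))
  | succ m ih =>
    intro hm hmem hvan
    have hmk : m < k := by omega
    rw [G.hearts_def hmk] at hmem
    obtain ⟨f', hf', B, ⟨t', ht', ⟨ib⟩⟩, hext⟩ := hmem
    obtain ⟨a, b, w, mem⟩ := hext
    have hTA : G.simples ⟨m, hmk⟩ ∈ A := G.strict _
    have ht'A : t' ∈ A := extGen_mem_of_mem hA hTA ht'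
    -- the torsion part `B` lies in all later hearts
    have hBmem : B ∈ G.hearts ⟨m + 1, by omega⟩ := by
      rw [G.hearts_def hmk]
      exact ⟨0, ⟨G.zero_mem_hearts hA m (by omega), fun φ => (isZero_zero D).eq_of_tgt φ 0⟩,
        B, ⟨t', ht', ⟨ib⟩⟩, ⟨0, 𝟙 B, 0, contractible_distinguished₁ B⟩⟩
    have hBk : B ∈ G.hearts ⟨k, by omega⟩ :=
      G.up_chain B k le_rfl (m+1) (by omega) hBmem
        (fun j hj _ _ φ =>
          hom_zero_of_iso_shift hA (G.strict ⟨j, hj⟩) ht'A (by norm_num) ib φ)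
    -- the torsion-free part `f'` lies in all later hearts
    have hf'k : f' ∈ G.hearts ⟨k, by omega⟩ := by
      refine G.up_chain f' k le_rfl m (by omega) hf'.1 ?_
      intro j hj hmj hjk φ
      by_cases hjm : j = m
      · subst hjm; exact hf'.2 φ
      · have hφa : φ ≫ a = 0 := hvan j hj (by omega) (φ ≫ a)
        obtain ⟨ψ, hψ⟩ := Triangle.coyoneda_exact₂ _ (inv_rot_of_distTriang _ mem) φ hφa
        have hψ0 : ψ = 0 :=
          hom_zero_of_iso_shift hA (G.strict ⟨j, hj⟩) ht'A (show (-2:ℤ) < 0 by norm_num)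
            ((shiftFunctor D (-1:ℤ)).mapIso ib ≪≫
              ((shiftFunctorAdd' D (-1) (-1) (-2) (by norm_num)).app t').symm) ψ
        rw [hψ, hψ0, zero_comp]
        rfl
    -- apply simplicity of `S⟦-1⟧` in the last heart
    have hlastf : f' ∈ G.hearts (Fin.last k) := hf'k
    have hlastB : B ∈ G.hearts (Fin.last k) := hBk
    rcases hsimp.2.2 f' B hlastf hlastB ⟨a, b, w, mem⟩ with hz | hz
    · -- the torsion-free part vanishes: `S ≅ t'`, hence `S ≅ G.simples m`
      have hb : IsIso b := (Triangle.isZero₁_iff_isIso₂ _ mem).1 hz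
      have e₀ : S⟦(-1:ℤ)⟧ ≅ t'⟦(-1:ℤ)⟧ := asIso b ≪≫ ib
      have eS : S ≅ t' :=
        ((shiftFunctorCompIsoId D (-1:ℤ) (1:ℤ) (by norm_num)).app S).symm ≪≫
          (shiftFunctor D (1:ℤ)).mapIso e₀ ≪≫
          (shiftFunctorCompIsoId D (-1:ℤ) (1:ℤ) (by norm_num)).app t'
      obtain ⟨eT⟩ := iso_of_simple_iso_extGen hA hS hTA ht' ⟨eS⟩
      exact ⟨⟨m, hmk⟩, ⟨eT⟩⟩
    · -- the torsion part vanishes: `S⟦-1⟧` descends to the previous heart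
      have ha : IsIso a := (Triangle.isZero₃_iff_isIso₁ _ mem).1 hz
      have hmem' : S⟦(-1:ℤ)⟧ ∈ G.hearts ⟨m, by omega⟩ :=
        G.hearts_isoClosed hA m (by omega) hf'.1 (asIso a)
      refine ih (by omega) hmem' ?_
      intro j hj hmj φ
      by_cases hjm : j = m
      · subst hjm
        have h0 : φ ≫ (asIso a).inv = 0 := hf'.2 _
        have h1 : φ = (φ ≫ (asIso a).inv) ≫ a := by simp
        rw [h1, h0, zero_comp]
      · exact hvan j hj (by omega) φ

end Aux

/-- Let `A` be an algebraic heart of a bounded t-structure of a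
triangulated category `D`, with `n` simple objects, which can be tilted
indefinitely.  Then in any maximal green sequence of `A` one tilts at all `n`
simple objects of `A`: every simple object of `A` is isomorphic to one of the
tilting objects of the sequence. -/
theorem maximal_green_seq_tilts_at_all_simples
    (A : Set D) (n : ℕ) (hA : IsAlgebraicHeart A) (hn : HasNSimples A n)
    (hTilt : TiltsIndefinitely A n)
    (k : ℕ) (G : GreenSeq A k) (hmax : G.IsMaximal) :
    ∀ S : D, IsSimpleIn A S → ∃ j : Fin k, Nonempty (S ≅ G.simples j) := by
  intro S hS
  have hheart : IsHeart A := hA.heart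
  have hmaxeq : G.hearts (Fin.last k) = shiftSet A (-1) := hmax
  have hsimp : IsSimpleIn (G.hearts (Fin.last k)) (S⟦(-1:ℤ)⟧) := by
    rw [hmaxeq]
    exact isSimpleIn_shift_neg_one hS
  have hmem : S⟦(-1:ℤ)⟧ ∈ G.hearts ⟨k, by omega⟩ := by
    have hlast : (⟨k, by omega⟩ : Fin (k+1)) = Fin.last k := rfl
    rw [hlast, hmaxeq]
    exact ⟨S, hS.1, ⟨Iso.refl _⟩⟩
  exact G.down_engine hheart hS hsimp k le_rfl hmem
    (fun j hj hkj φ => absurd hj (by omega))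

end GreenSeqPaper
end

section
/- Let A be a finite-dimensional algebra over an algebraically closed field k. If the module category A-mod has only finitely many bricks up to isomorphism (i.e. finite-dimensional modules E with End(E) = k), then A-mod has only finitely many torsion classes. -/
open CategoryTheory Limits

universe v u

namespace GreenSeqPaper

section GeneralAlgebra

variable (k : Type) [Field k] [IsAlgClosed k] (R : Type) [Ring R] [Algebra k R]

-- the scoped instances giving each `R`-module its canonical `k`-vector space structure
attribute [local instance] ModuleCat.moduleOfAlgebraModule
  ModuleCat.isScalarTower_of_algebra_moduleCat

/-- An `R`-module is an object of `R-mod` if it is finite-dimensional over `k`. -/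
def FinDimMod (M : ModuleCat.{0} R) : Prop := FiniteDimensional k M

/-- A brick: a module `E` with `Hom_R(E, E) = k`, i.e. `E` is nonzero and every
endomorphism of `E` is multiplication by a scalar of `k`. -/
def IsBrickOver (M : ModuleCat.{0} R) : Prop :=
  (∃ m : M, m ≠ 0) ∧ ∀ f : M ⟶ M, ∃ c : k, ∀ m : M, f m = algebraMap k R c • m

/-- `0 ⟶ X ⟶ E ⟶ Y ⟶ 0` is a short exact sequence of `R`-modules. -/
def ModSES (X E Y : ModuleCat.{0} R) : Prop :=
  ∃ (i : X ⟶ E) (p : E ⟶ Y), Function.Injective i ∧ Function.Surjective p ∧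
    LinearMap.range i.hom = LinearMap.ker p.hom

/-- A torsion pair `(T, F)` in `R-mod` (the category of finite-dimensional left
`R`-modules): `Hom(T, F) = 0` for all `T ∈ T`, `F ∈ F`, and every module is an
extension of a torsion-free module by a torsion one. -/
structure IsModTorsionPair (T F : Set (ModuleCat.{0} R)) : Prop where
  subT : ∀ M ∈ T, FinDimMod k R M
  subF : ∀ M ∈ F, FinDimMod k R M
  isoClosedT : ∀ {M N : ModuleCat.{0} R}, M ∈ T → Nonempty (M ≅ N) → N ∈ T
  isoClosedF : ∀ {M N : ModuleCat.{0} R}, M ∈ F → Nonempty (M ≅ N) → N ∈ F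
  hom_zero : ∀ t ∈ T, ∀ f ∈ F, ∀ φ : t ⟶ f, φ = 0
  ses : ∀ E : ModuleCat.{0} R, FinDimMod k R E → ∃ t ∈ T, ∃ f ∈ F, ModSES R t E f

/-- A torsion class in `R-mod`: the torsion part of a torsion pair. -/
def IsModTorsionClass (T : Set (ModuleCat.{0} R)) : Prop := ∃ F, IsModTorsionPair k R T F


noncomputable def fdim (M : ModuleCat.{0} R) : ℕ := Module.finrank k M

def kmap {M N : ModuleCat.{0} R} (f : M ⟶ N) : ↑M →ₗ[k] ↑N :=
  LinearMap.restrictScalars k (show ↑M →ₗ[R] ↑N from f.hom)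

variable {T F : Set (ModuleCat.{0} R)}

set_option linter.unusedSectionVars false in
theorem ses_dim {X E Y : ModuleCat.{0} R} (hE : FinDimMod k R E) (h : ModSES R X E Y) :
    FinDimMod k R X ∧ FinDimMod k R Y ∧ fdim k R E = fdim k R X + fdim k R Y := by
  haveI : FiniteDimensional k ↑E := hE
  obtain ⟨i, p, hi, hp, hr⟩ := h
  have hik : Function.Injective (kmap k R i) := hi
  have hpk : Function.Surjective (kmap k R p) := hp
  haveI hX : FiniteDimensional k ↑X := FiniteDimensional.of_injective (kmap k R i) hik
  haveI hY : FiniteDimensional k ↑Y := Module.Finite.of_surjective (kmap k R p) hpk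
  refine ⟨hX, hY, ?_⟩
  have hker : LinearMap.ker (kmap k R p) = LinearMap.range (kmap k R i) := by
    ext x
    have := SetLike.ext_iff.mp hr x
    simp only [LinearMap.mem_ker, LinearMap.mem_range] at *
    constructor
    · intro hx; exact this.mpr hx
    · rintro ⟨y, rfl⟩; exact this.mp ⟨y, rfl⟩
  have h1 := LinearMap.finrank_range_add_finrank_ker (kmap k R p)
  rw [LinearMap.range_eq_top.mpr hpk, finrank_top, hker,
    LinearMap.finrank_range_of_inj hik] at h1
  unfold fdim
  omega

set_option linter.unusedSectionVars false in
theorem mem_of_bijective (htp : IsModTorsionPair k R T F) {t E : ModuleCat.{0} R}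
    (ht : t ∈ T) (i : t ⟶ E) (hbij : Function.Bijective i) : E ∈ T := by
  refine htp.isoClosedT ht ⟨?_⟩
  exact (LinearEquiv.ofBijective (show ↑t →ₗ[R] ↑E from i.hom) hbij).toModuleIso

set_option linter.unusedSectionVars false in
theorem zero_mem (htp : IsModTorsionPair k R T F) {M : ModuleCat.{0} R}
    (hM : FinDimMod k R M) (h0 : ∀ m : ↑M, m = 0) : M ∈ T := by
  obtain ⟨t, ht, f, hf, i, p, hi, hp, hr⟩ := htp.ses M hM
  exact mem_of_bijective k R htp ht i ⟨hi, fun m => ⟨0, ((h0 _).trans (h0 m).symm)⟩⟩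

set_option linter.unusedSectionVars false in
theorem quot_mem (htp : IsModTorsionPair k R T F) {M Q : ModuleCat.{0} R}
    (hM : M ∈ T) (hQ : FinDimMod k R Q) (q : M ⟶ Q) (hq : Function.Surjective q) :
    Q ∈ T := by
  obtain ⟨t, ht, f, hf, i, p, hi, hp, hr⟩ := htp.ses Q hQ
  have hz : q ≫ p = 0 := htp.hom_zero M hM f hf (q ≫ p)
  have hp0 : ∀ x : ↑Q, p x = 0 := by
    intro x
    obtain ⟨m, rfl⟩ := hq x
    exact congrFun (congrArg (fun g => DFunLike.coe (ConcreteCategory.hom g)) hz) m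
  have hsurj : Function.Surjective i := by
    intro x
    have : x ∈ LinearMap.ker p.hom := hp0 x
    rw [← hr] at this
    obtain ⟨y, hy⟩ := this
    exact ⟨y, hy⟩
  exact mem_of_bijective k R htp ht i ⟨hi, hsurj⟩

set_option linter.unusedSectionVars false in
theorem ext_mem (htp : IsModTorsionPair k R T F) {X E Y : ModuleCat.{0} R}
    (hX : X ∈ T) (hY : Y ∈ T) (hE : FinDimMod k R E) (hses : ModSES R X E Y) :
    E ∈ T := by
  obtain ⟨i, p, hi, hp, hr⟩ := hses
  obtain ⟨t, ht, f, hf, j, q, hj, hq, hr2⟩ := htp.ses E hE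
  -- q kills the image of X
  have hqi : ∀ x : ↑X, q (i x) = 0 := by
    intro x
    have hz : i ≫ q = 0 := htp.hom_zero X hX f hf (i ≫ q)
    exact congrFun (congrArg (fun g => DFunLike.coe (ConcreteCategory.hom g)) hz) x
  have key : ∀ z : ↑E, p z = 0 → q z = 0 := by
    intro z hz
    have : z ∈ LinearMap.range i.hom := by rw [hr]; exact hz
    obtain ⟨x, rfl⟩ := this
    exact hqi x
  -- a set-theoretic section of p
  choose s hs using hp
  -- the induced morphism Y ⟶ f
  have hsub : ∀ z : ↑E, q z = q (s (p z)) := by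
    intro z
    have h1 : q (z - s (p z)) = 0 := key _ (by simp [hs])
    have := map_sub (show ↑E →ₗ[R] ↑f from q.hom) z (s (p z))
    rw [h1] at this
    exact (sub_eq_zero.mp this.symm)
  let ψ : ↑Y →ₗ[R] ↑f :=
    { toFun := fun y => q (s y)
      map_add' := by
        intro a b
        show q (s (a + b)) = q (s a) + q (s b)
        have h1 : q (s (a + b)) = q (s (p (s a + s b))) := by
          rw [map_add (show ↑E →ₗ[R] ↑Y from p.hom), hs, hs]
        rw [h1, ← hsub, map_add (show ↑E →ₗ[R] ↑f from q.hom)]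
      map_smul' := by
        intro r a
        show q (s (r • a)) = r • q (s a)
        have h1 : q (s (r • a)) = q (s (p (r • s a))) := by
          rw [map_smul (show ↑E →ₗ[R] ↑Y from p.hom), hs]
        rw [h1, ← hsub, map_smul (show ↑E →ₗ[R] ↑f from q.hom)] }
  have hψ : (show Y ⟶ f from ModuleCat.ofHom ψ) = 0 := htp.hom_zero Y hY f hf (ModuleCat.ofHom ψ)
  have hq0 : ∀ z : ↑E, q z = 0 := by
    intro z
    rw [hsub z]
    exact congrFun (congrArg (fun g => DFunLike.coe (ConcreteCategory.hom g)) hψ) (p z)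
  have hsurj : Function.Surjective j := by
    intro x
    have : x ∈ LinearMap.ker q.hom := hq0 x
    rw [← hr2] at this
    obtain ⟨y, hy⟩ := this
    exact ⟨y, hy⟩
  exact mem_of_bijective k R htp ht j ⟨hj, hsurj⟩

set_option linter.unusedSectionVars false in
theorem range_equiv_finrank {M N : ModuleCat.{0} R} (f : M ⟶ N) :
    Module.finrank k ↑(ModuleCat.of R ↥(LinearMap.range (show ↑M →ₗ[R] ↑N from f.hom)))
      = Module.finrank k ↥(LinearMap.range (kmap k R f)) := by
  refine LinearEquiv.finrank_eq ?_
  refine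
    { toFun := fun x => ⟨x.1, by obtain ⟨y, hy⟩ := x.2; exact ⟨y, hy⟩⟩
      invFun := fun x => ⟨x.1, by obtain ⟨y, hy⟩ := x.2; exact ⟨y, hy⟩⟩
      map_add' := fun a b => rfl
      map_smul' := fun c a => rfl
      left_inv := fun a => rfl
      right_inv := fun a => rfl }

set_option linter.unusedSectionVars false in
theorem brick_sub (htp : IsModTorsionPair k R T F) {M : ModuleCat.{0} R}
    (hM : M ∈ T) (hne : ∃ m : ↑M, m ≠ 0) :
    ∃ N, N ∈ T ∧ IsBrickOver k R N ∧ ∃ j : N ⟶ M, Function.Injective j := by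
  set P : ℕ → Prop := fun d => ∃ N, (N ∈ T ∧ (∃ m : ↑N, m ≠ 0) ∧
    ∃ j : N ⟶ M, Function.Injective j) ∧ fdim k R N = d with hPdef
  have hP : P (fdim k R M) := ⟨M, ⟨hM, hne, 𝟙 M, fun a b h => h⟩, rfl⟩
  have hnem : (setOf P).Nonempty := ⟨_, hP⟩
  obtain ⟨N, ⟨hNT, hNne, j, hj⟩, hNd⟩ := Nat.sInf_mem hnem
  haveI hNfd : FiniteDimensional k ↑N := htp.subT N hNT
  -- Claim: every endomorphism of N which is nonzero is injective
  have claim : ∀ f : N ⟶ N, (∃ m : ↑N, f m ≠ 0) → Function.Injective f := by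
    intro f hf0
    obtain ⟨m₀, hm₀⟩ := hf0
    set f' : ↑N →ₗ[R] ↑N := f.hom with hf'
    set Rg : ModuleCat.{0} R := ModuleCat.of R ↥(LinearMap.range f') with hRg
    set ι : Rg ⟶ N := ModuleCat.ofHom (LinearMap.range f').subtype with hι
    have hιinj : Function.Injective ι := Subtype.val_injective
    have hRgfd : FinDimMod k R Rg :=
      FiniteDimensional.of_injective (kmap k R ι) hιinj
    have hRgT : Rg ∈ T := quot_mem k R htp hNT hRgfd
      (show N ⟶ Rg from ModuleCat.ofHom f'.rangeRestrict) (LinearMap.surjective_rangeRestrict f')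
    have hRgne : ∃ x : ↑Rg, x ≠ 0 :=
      ⟨⟨f m₀, ⟨m₀, rfl⟩⟩, fun h => hm₀ (congrArg Subtype.val h)⟩
    have hcompinj : Function.Injective (ι ≫ j) := hj.comp hιinj
    have hd : sInf (setOf P) ≤ fdim k R Rg :=
      Nat.sInf_le (show fdim k R Rg ∈ setOf P from ⟨Rg, ⟨hRgT, hRgne, ι ≫ j, hcompinj⟩, rfl⟩)
    rw [← hNd] at hd
    have hrnk := LinearMap.finrank_range_add_finrank_ker (kmap k R f)
    have heq := range_equiv_finrank k R f
    have hker0 : Module.finrank k ↥(LinearMap.ker (kmap k R f)) = 0 := by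
      have h5 : fdim k R Rg = Module.finrank k ↥(LinearMap.range (kmap k R f)) := heq
      have h6 : Module.finrank k ↑N = fdim k R N := rfl
      omega
    have hker : LinearMap.ker (kmap k R f) = ⊥ := Submodule.finrank_eq_zero.mp hker0
    have hkinj : Function.Injective (kmap k R f) := LinearMap.ker_eq_bot.mp hker
    exact hkinj
  refine ⟨N, hNT, ⟨hNne, ?_⟩, j, hj⟩
  -- every endomorphism is a scalar
  intro f
  obtain ⟨m₁, hm₁⟩ := hNne
  haveI : Nontrivial ↑N := nontrivial_of_ne m₁ 0 hm₁
  obtain ⟨c, hc⟩ := Module.End.exists_eigenvalue (kmap k R f)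
  obtain ⟨v, hv⟩ := hc.exists_hasEigenvector
  refine ⟨c, ?_⟩
  let g : N ⟶ N := ModuleCat.ofHom <| show ↑N →ₗ[R] ↑N from
    { toFun := fun m => f m - algebraMap k R c • m
      map_add' := by
        intro a b
        show f (a + b) - algebraMap k R c • (a + b)
          = (f a - algebraMap k R c • a) + (f b - algebraMap k R c • b)
        rw [map_add f.hom, smul_add]
        abel
      map_smul' := by
        intro r a
        show f (r • a) - algebraMap k R c • (r • a) = r • (f a - algebraMap k R c • a)
        rw [map_smul f.hom, smul_sub, smul_smul, smul_smul, Algebra.commutes c r] }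
  have hgapp : ∀ m : ↑N, g m = f m - algebraMap k R c • m := fun m => rfl
  have hgv : g v = 0 := by
    rw [hgapp]
    have h1 : algebraMap k R c • v = c • v := algebraMap_smul R c v
    have h2 : f v = c • v := hv.apply_eq_smul
    rw [h1, h2, sub_self]
  have hg0 : ∀ m : ↑N, g m = 0 := by
    by_contra hcon
    push_neg at hcon
    obtain ⟨m, hm⟩ := hcon
    have hinj := claim g ⟨m, hm⟩
    exact hv.2 (hinj (hgv.trans (map_zero g.hom).symm))
  intro m
  have h3 : f m - algebraMap k R c • m = 0 := (hgapp m).symm.trans (hg0 m)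
  exact sub_eq_zero.mp h3

set_option linter.unusedSectionVars false in
theorem subset_of_bricks_subset {T₁ F₁ T₂ F₂ : Set (ModuleCat.{0} R)}
    (htp₁ : IsModTorsionPair k R T₁ F₁) (htp₂ : IsModTorsionPair k R T₂ F₂)
    (hB : ∀ B, FinDimMod k R B → IsBrickOver k R B → B ∈ T₁ → B ∈ T₂) : T₁ ⊆ T₂ := by
  suffices h : ∀ d, ∀ M, M ∈ T₁ → fdim k R M = d → M ∈ T₂ by
    intro M hM; exact h _ M hM rfl
  intro d
  induction d using Nat.strong_induction_on with
  | _ d ih =>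
    intro M hM hd
    haveI hMfd : FiniteDimensional k ↑M := htp₁.subT M hM
    by_cases hz : ∀ m : ↑M, m = 0
    · exact zero_mem k R htp₂ (htp₁.subT M hM) hz
    · push_neg at hz
      obtain ⟨N, hNT, hNbr, j, hj⟩ := brick_sub k R htp₁ hM hz
      have hN2 : N ∈ T₂ := hB N (htp₁.subT N hNT) hNbr hNT
      set j' : ↑N →ₗ[R] ↑M := j.hom with hj'
      set Q : ModuleCat.{0} R := ModuleCat.of R (↑M ⧸ LinearMap.range j') with hQ
      set pq : M ⟶ Q := ModuleCat.ofHom <| show ↑M →ₗ[R] ↑Q from (LinearMap.range j').mkQ with hpq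
      have hses : ModSES R N M Q :=
        ⟨j, pq, hj, Submodule.mkQ_surjective _, (Submodule.ker_mkQ _).symm⟩
      obtain ⟨hNfd, hQfd, hdim⟩ := ses_dim k R (htp₁.subT M hM) hses
      have hQT1 : Q ∈ T₁ := quot_mem k R htp₁ hM hQfd pq (Submodule.mkQ_surjective _)
      obtain ⟨m₁, hm₁⟩ := hNbr.1
      haveI : Nontrivial ↑N := nontrivial_of_ne m₁ 0 hm₁
      haveI : FiniteDimensional k ↑N := hNfd
      have hpos : 0 < fdim k R N := Module.finrank_pos
      have hlt : fdim k R Q < d := by omega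
      have hQT2 : Q ∈ T₂ := ih _ hlt Q hQT1 rfl
      exact ext_mem k R htp₂ hN2 hQT2 (htp₁.subT M hM) hses


/-- Let `R` be a finite-dimensional algebra over an algebraically
closed field `k`.  If the module category `R-mod` has only finitely many bricks
up to isomorphism, then `R-mod` has only finitely many torsion classes. -/
theorem finitely_many_torsion_classes_of_finitely_many_bricks
    [FiniteDimensional k R]
    (hbricks : ∃ (n : ℕ) (g : Fin n → ModuleCat.{0} R),
      ∀ M : ModuleCat.{0} R, FinDimMod k R M → IsBrickOver k R M →
        ∃ i, Nonempty (M ≅ g i)) :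
    { T : Set (ModuleCat.{0} R) | IsModTorsionClass k R T }.Finite := by
  obtain ⟨n, g, hg⟩ := hbricks
  have hinj : Set.InjOn (fun T => {i : Fin n | g i ∈ T})
      {T : Set (ModuleCat.{0} R) | IsModTorsionClass k R T} := by
    intro T₁ hT₁ T₂ hT₂ heq
    obtain ⟨F₁, htp₁⟩ := hT₁
    obtain ⟨F₂, htp₂⟩ := hT₂
    have hiff : ∀ i, g i ∈ T₁ ↔ g i ∈ T₂ := by
      intro i
      have := Set.ext_iff.mp heq i
      simpa using this
    apply Set.Subset.antisymm
    · refine subset_of_bricks_subset k R htp₁ htp₂ ?_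
      intro B hfd hbr hB1
      obtain ⟨i, ⟨e⟩⟩ := hg B hfd hbr
      have h1 : g i ∈ T₁ := htp₁.isoClosedT hB1 ⟨e⟩
      have h2 : g i ∈ T₂ := (hiff i).mp h1
      exact htp₂.isoClosedT h2 ⟨e.symm⟩
    · refine subset_of_bricks_subset k R htp₂ htp₁ ?_
      intro B hfd hbr hB2
      obtain ⟨i, ⟨e⟩⟩ := hg B hfd hbr
      have h1 : g i ∈ T₂ := htp₂.isoClosedT hB2 ⟨e⟩
      have h2 : g i ∈ T₁ := (hiff i).mpr h1
      exact htp₁.isoClosedT h2 ⟨e.symm⟩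
  exact Set.Finite.of_finite_image (Set.toFinite _) hinj


end GeneralAlgebra

end GreenSeqPaper
end

section
/- Let A be the heart of a bounded t-structure of a triangulated category, let (T,F) be a torsion pair in A, and let (T',F') be a torsion pair in the tilted heart A* = ⟨F, T[−1]⟩. If T' ⊂ F, then the left tilt A** = ⟨F', T'[−1]⟩ of A* equals the left tilt of A with respect to the torsion pair (T ⋆ T', F ∩ F'). -/
open CategoryTheory Limits Pretriangulated

universe v u

namespace GreenSeqPaper

/-! ## Hearts of bounded t-structures, simple tilts, green sequences

We formalize hearts of bounded t-structures of a (pre)triangulated category `D`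
concretely, as sets of objects `H : Set D` satisfying Bridgeland's
characterization: negative self-Homs vanish and every object of `D` is a finite
extension of shifts of objects of `H`.  Short exact sequences in the heart are
exactly the distinguished triangles with all three vertices in the heart. -/


variable {D : Type u} [Category.{v} D] [Preadditive D] [Limits.HasZeroObject D]
  [HasShift D ℤ] [∀ n : ℤ, (CategoryTheory.shiftFunctor D n).Additive] [Pretriangulated D]

section Aux
open Category Preadditive ZeroObject
set_option linter.unusedSectionVars false

noncomputable def desh {R P : D} (c : R ⟶ P⟦(1:ℤ)⟧) : R⟦(-1:ℤ)⟧ ⟶ P :=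
  c⟦(-1:ℤ)⟧' ≫ (shiftEquiv D (1:ℤ)).unitIso.inv.app P

lemma desh_natural {R P P' : D} (c : R ⟶ P⟦(1:ℤ)⟧) (g : P ⟶ P') :
    desh (c ≫ g⟦(1:ℤ)⟧') = desh c ≫ g := by
  simp only [desh]
  rw [Functor.map_comp]
  exact (assoc _ _ _).trans ((_ ≫= (shiftEquiv D (1:ℤ)).unitIso.inv.naturality g).trans (assoc _ _ _).symm)

lemma desh_precomp {R' R P : D} (x : R' ⟶ R) (c : R ⟶ P⟦(1:ℤ)⟧) :
    desh (x ≫ c) = x⟦(-1:ℤ)⟧' ≫ desh c := by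
  simp only [desh]; rw [Functor.map_comp]; exact assoc _ _ _

lemma desh_invRotate_mor₃ (T : Triangle D) :
    desh ((T.invRotate).mor₃) = T.mor₂⟦(-1:ℤ)⟧' := by
  simp only [desh, Triangle.invRotate_mor₃, Triangle.invRotate_obj₁]
  exact (Functor.map_comp _ _ _ =≫ _).trans ((assoc _ _ _).trans
    ((_ ≫= (shiftEquiv D (1:ℤ)).inverse_counitInv_comp T.obj₃).trans (comp_id _)))

lemma invRotate_mor₁_eq (T : Triangle D) : (T.invRotate).mor₁ = -(desh T.mor₃) := by
  simp only [desh, Triangle.invRotate_mor₁, Preadditive.neg_comp]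
  rfl

lemma cov₁ {T : Triangle D} (hT : T ∈ distTriang D) {U : D} (x : U ⟶ T.obj₁)
    (hx : x ≫ T.mor₁ = 0) : ∃ y : U ⟶ T.obj₃⟦(-1:ℤ)⟧, x = y ≫ desh T.mor₃ := by
  obtain ⟨y, hy⟩ := Triangle.coyoneda_exact₂ _ (inv_rot_of_distTriang _ hT) x hx
  refine ⟨-y, ?_⟩
  rw [hy, invRotate_mor₁_eq]; exact (Preadditive.comp_neg _ _).trans (Preadditive.neg_comp _ _).symm

lemma con₁ {T : Triangle D} (hT : T ∈ distTriang D) {U : D} (x : T.obj₁ ⟶ U)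
    (hx : desh T.mor₃ ≫ x = 0) : ∃ y : T.obj₂ ⟶ U, x = T.mor₁ ≫ y := by
  obtain ⟨y, hy⟩ := Triangle.yoneda_exact₂ _ (inv_rot_of_distTriang _ hT) x
    (by rw [invRotate_mor₁_eq]; exact (Preadditive.neg_comp _ _).trans ((congrArg Neg.neg hx).trans neg_zero))
  exact ⟨y, hy⟩

lemma deszero {T : Triangle D} (hT : T ∈ distTriang D) : desh T.mor₃ ≫ T.mor₁ = 0 := by
  have h := comp_distTriang_mor_zero₁₂ _ (inv_rot_of_distTriang _ hT)
  rw [invRotate_mor₁_eq] at h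
  exact neg_eq_zero.mp ((Preadditive.neg_comp _ _).symm.trans h)

lemma cov₁' {T : Triangle D} (hT : T ∈ distTriang D) {U : D} (x : U ⟶ T.obj₃⟦(-1:ℤ)⟧)
    (hx : x ≫ desh T.mor₃ = 0) : ∃ y : U ⟶ T.obj₂⟦(-1:ℤ)⟧, x = y ≫ T.mor₂⟦(-1:ℤ)⟧' := by
  obtain ⟨y, hy⟩ := cov₁ (inv_rot_of_distTriang _ hT) x
    (by rw [invRotate_mor₁_eq]; exact (Preadditive.comp_neg _ _).trans ((congrArg Neg.neg hx).trans neg_zero))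
  rw [desh_invRotate_mor₃] at hy
  exact ⟨y, hy⟩

lemma homZero_mid_cov {T : Triangle D} (hT : T ∈ distTriang D) {U : D}
    (h₁ : ∀ f : U ⟶ T.obj₁, f = 0) (h₃ : ∀ f : U ⟶ T.obj₃, f = 0) :
    ∀ f : U ⟶ T.obj₂, f = 0 := by
  intro f
  obtain ⟨y, hy⟩ := Triangle.coyoneda_exact₂ _ hT f (by rw [h₃ (f ≫ T.mor₂)])
  rw [hy, h₁ y, zero_comp]

lemma homZero_mid_con {T : Triangle D} (hT : T ∈ distTriang D) {U : D}
    (h₁ : ∀ f : T.obj₁ ⟶ U, f = 0) (h₃ : ∀ f : T.obj₃ ⟶ U, f = 0) :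
    ∀ f : T.obj₂ ⟶ U, f = 0 := by
  intro f
  obtain ⟨y, hy⟩ := Triangle.yoneda_exact₂ _ hT f (h₁ _)
  rw [hy, h₃ y, comp_zero]

lemma zeroHomTransport {A B A' B' : D} (eA : A ≅ A') (eB : B ≅ B')
    (h : ∀ f : A ⟶ B, f = 0) : ∀ f : A' ⟶ B', f = 0 := by
  intro f
  have h0 : eA.hom ≫ f ≫ eB.inv = 0 := h _
  calc f = eA.inv ≫ (eA.hom ≫ f ≫ eB.inv) ≫ eB.hom := by simp
  _ = 0 := by rw [h0]; simp

lemma shiftHomZero {P Q : D} (hneg : ∀ n : ℤ, n < 0 → ∀ f : P ⟶ Q⟦n⟧, f = 0)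
    (m n : ℤ) (h : n < m) : ∀ f : P⟦m⟧ ⟶ Q⟦n⟧, f = 0 := by
  intro f
  have h0 : (shiftFunctor D (-m)).map f = 0 := by
    have hg : (shiftFunctorCompIsoId D m (-m) (by omega)).inv.app P ≫ f⟦(-m:ℤ)⟧' ≫
        (shiftFunctorAdd' D n (-m) (n-m) (by omega)).inv.app Q = 0 :=
      hneg (n-m) (by omega) _
    have h2 := congrArg (fun t => (shiftFunctorCompIsoId D m (-m) (by omega)).hom.app P ≫ t ≫
      (shiftFunctorAdd' D n (-m) (n-m) (by omega)).hom.app Q) hg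
    simpa using h2
  exact (shiftFunctor D (-m)).map_eq_zero_iff.mp h0



section MkWrappers
variable {P Q R : D} {a : P ⟶ Q} {b : Q ⟶ R} {c : R ⟶ P⟦(1:ℤ)⟧}

lemma z12 (hT : Triangle.mk a b c ∈ distTriang D) : a ≫ b = 0 :=
  comp_distTriang_mor_zero₁₂ _ hT
lemma z23 (hT : Triangle.mk a b c ∈ distTriang D) : b ≫ c = 0 :=
  comp_distTriang_mor_zero₂₃ _ hT
lemma z31 (hT : Triangle.mk a b c ∈ distTriang D) : c ≫ a⟦(1:ℤ)⟧' = 0 :=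
  comp_distTriang_mor_zero₃₁ _ hT
lemma zdesh (hT : Triangle.mk a b c ∈ distTriang D) : desh c ≫ a = 0 := deszero hT

lemma cov2 (hT : Triangle.mk a b c ∈ distTriang D) {U : D} (f : U ⟶ Q) (hf : f ≫ b = 0) :
    ∃ g : U ⟶ P, f = g ≫ a := Triangle.coyoneda_exact₂ _ hT f hf
lemma cov3 (hT : Triangle.mk a b c ∈ distTriang D) {U : D} (f : U ⟶ R) (hf : f ≫ c = 0) :
    ∃ g : U ⟶ Q, f = g ≫ b := Triangle.coyoneda_exact₃ _ hT f hf
lemma con2 (hT : Triangle.mk a b c ∈ distTriang D) {U : D} (f : Q ⟶ U) (hf : a ≫ f = 0) :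
    ∃ g : R ⟶ U, f = b ≫ g := Triangle.yoneda_exact₂ _ hT f hf
lemma con3 (hT : Triangle.mk a b c ∈ distTriang D) {U : D} (f : R ⟶ U) (hf : b ≫ f = 0) :
    ∃ g : P⟦(1:ℤ)⟧ ⟶ U, f = c ≫ g := Triangle.yoneda_exact₃ _ hT f hf
lemma cov1 (hT : Triangle.mk a b c ∈ distTriang D) {U : D} (x : U ⟶ P) (hx : x ≫ a = 0) :
    ∃ y : U ⟶ R⟦(-1:ℤ)⟧, x = y ≫ desh c := cov₁ hT x hx
lemma con1 (hT : Triangle.mk a b c ∈ distTriang D) {U : D} (x : P ⟶ U)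
    (hx : desh c ≫ x = 0) : ∃ y : Q ⟶ U, x = a ≫ y := con₁ hT x hx
lemma cov1' (hT : Triangle.mk a b c ∈ distTriang D) {U : D} (x : U ⟶ R⟦(-1:ℤ)⟧)
    (hx : x ≫ desh c = 0) : ∃ y : U ⟶ Q⟦(-1:ℤ)⟧, x = y ≫ b⟦(-1:ℤ)⟧' := cov₁' hT x hx

lemma midCov (hT : Triangle.mk a b c ∈ distTriang D) {U : D}
    (h₁ : ∀ f : U ⟶ P, f = 0) (h₃ : ∀ f : U ⟶ R, f = 0) : ∀ f : U ⟶ Q, f = 0 :=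
  homZero_mid_cov hT h₁ h₃
lemma midCon (hT : Triangle.mk a b c ∈ distTriang D) {U : D}
    (h₁ : ∀ f : P ⟶ U, f = 0) (h₃ : ∀ f : R ⟶ U, f = 0) : ∀ f : Q ⟶ U, f = 0 :=
  homZero_mid_con hT h₁ h₃

lemma complete₀ {P' Q' R' : D} {a' : P' ⟶ Q'} {b' : Q' ⟶ R'} {c' : R' ⟶ P'⟦(1:ℤ)⟧}
    (hT : Triangle.mk a b c ∈ distTriang D) (hT' : Triangle.mk a' b' c' ∈ distTriang D)
    (e : P ⟶ P') (f : Q ⟶ Q') (comm : a ≫ f = e ≫ a') :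
    ∃ g : R ⟶ R', b ≫ g = f ≫ b' ∧ c ≫ e⟦(1:ℤ)⟧' = g ≫ c' :=
  complete_distinguished_triangle_morphism _ _ hT hT' e f comm
lemma complete₁ {P' Q' R' : D} {a' : P' ⟶ Q'} {b' : Q' ⟶ R'} {c' : R' ⟶ P'⟦(1:ℤ)⟧}
    (hT : Triangle.mk a b c ∈ distTriang D) (hT' : Triangle.mk a' b' c' ∈ distTriang D)
    (f : Q ⟶ Q') (g : R ⟶ R') (comm : b ≫ g = f ≫ b') :
    ∃ e : P ⟶ P', a ≫ f = e ≫ a' ∧ c ≫ e⟦(1:ℤ)⟧' = g ≫ c' :=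
  complete_distinguished_triangle_morphism₁ _ _ hT hT' f g comm
lemma complete₂ {P' Q' R' : D} {a' : P' ⟶ Q'} {b' : Q' ⟶ R'} {c' : R' ⟶ P'⟦(1:ℤ)⟧}
    (hT : Triangle.mk a b c ∈ distTriang D) (hT' : Triangle.mk a' b' c' ∈ distTriang D)
    (e : P ⟶ P') (g : R ⟶ R') (comm : c ≫ e⟦(1:ℤ)⟧' = g ≫ c') :
    ∃ f : Q ⟶ Q', a ≫ f = e ≫ a' ∧ b ≫ g = f ≫ b' :=
  complete_distinguished_triangle_morphism₂ _ _ hT hT' e g comm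


lemma con4 (hT : Triangle.mk a b c ∈ distTriang D) {U : D} (x : P⟦(1:ℤ)⟧ ⟶ U)
    (hx : c ≫ x = 0) : ∃ y : Q⟦(1:ℤ)⟧ ⟶ U, x = a⟦(1:ℤ)⟧' ≫ y := by
  obtain ⟨g, hg⟩ := Triangle.yoneda_exact₃ _ (rot_of_distTriang _ hT) x (by dsimp only [Triangle.rotate, Triangle.mk]; exact hx)
  simp only [Triangle.rotate_mor₃, Triangle.mk_mor₁] at hg
  refine ⟨-g, ?_⟩
  rw [hg]; exact (Preadditive.neg_comp _ _).trans (Preadditive.comp_neg _ _).symm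

end MkWrappers


lemma shape1 {X Y Z Z₁ Z₂ : D}
    {α : X ⟶ Y} {β : Y ⟶ Z} {γ : Z ⟶ X⟦(1:ℤ)⟧}
    (h1 : Triangle.mk α β γ ∈ distTriang D)
    {α' : Z₁ ⟶ Z} {β' : Z ⟶ Z₂} {γ' : Z₂ ⟶ Z₁⟦(1:ℤ)⟧}
    (h2 : Triangle.mk α' β' γ' ∈ distTriang D)
    (vA : ∀ f : X ⟶ Z₂⟦(-1:ℤ)⟧, f = 0)
    (vB : ∀ f : Z₁ ⟶ Z₂⟦(-1:ℤ)⟧, f = 0)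
    (vC : ∀ f : X⟦(1:ℤ)⟧ ⟶ Z₁, f = 0)
    (vD : ∀ f : X⟦(1:ℤ)⟧ ⟶ Z₂⟦(-1:ℤ)⟧, f = 0)
    (vF : ∀ f : X⟦(1:ℤ)⟧ ⟶ Z₂, f = 0)
    (vG : ∀ f : X ⟶ Z₁⟦(-1:ℤ)⟧, f = 0) :
    ∃ W, IsExt X W Z₁ ∧ IsExt W Y Z₂ := by
  obtain ⟨W, φ, χ, hT3⟩ := distinguished_cocone_triangle₁ (β ≫ β')
  obtain ⟨μ, hμ1, hμ2⟩ := complete₁ hT3 h2 β (𝟙 Z₂) (by rw [comp_id])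
  rw [id_comp] at hμ2
  obtain ⟨abar, ha1, ha2⟩ := complete₁ h1 hT3 (𝟙 Y) β' (by rw [id_comp])
  rw [comp_id] at ha1
  obtain ⟨u, p, q, hTu⟩ := distinguished_cocone_triangle₂ (α' ≫ γ)
  obtain ⟨m, hm1, hm2⟩ := complete₂ hTu h1 (𝟙 X) α'
    (by rw [CategoryTheory.Functor.map_id, comp_id])
  rw [id_comp] at hm1
  obtain ⟨mhat, hmhat⟩ := cov2 hT3 m
    (by rw [← assoc, ← hm2, assoc, z12 h2, comp_zero])
  have hG7 : p ≫ mhat = abar := by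
    have hz : (p ≫ mhat - abar) ≫ φ = 0 := by
      rw [sub_comp, assoc, ← hmhat, hm1, ha1, sub_self]
    obtain ⟨y, hy⟩ := cov1 hT3 _ hz
    rw [vA y, zero_comp] at hy
    exact sub_eq_zero.mp hy
  have hUZ2 : ∀ f : u ⟶ Z₂⟦(-1:ℤ)⟧, f = 0 := midCon hTu vA vB
  have hG8 : mhat ≫ μ = q := by
    have hz : (mhat ≫ μ - q) ≫ α' = 0 := by
      rw [sub_comp, assoc, ← hμ1, ← assoc, ← hmhat, hm2, sub_self]
    obtain ⟨y, hy⟩ := cov1 h2 _ hz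
    rw [hUZ2 y, zero_comp] at hy
    exact sub_eq_zero.mp hy
  obtain ⟨v, s, r, h4⟩ := distinguished_cocone_triangle abar
  obtain ⟨w, hw1, hw2⟩ := complete₀ hTu h4 (𝟙 X) mhat (by rw [hG7, id_comp])
  rw [CategoryTheory.Functor.map_id, comp_id] at hw2
  have haμ : abar ≫ μ = 0 := by
    have hz : (abar ≫ μ) ≫ α' = 0 := by
      rw [assoc, ← hμ1, ← assoc, ← ha1, z12 h1]
    obtain ⟨y, hy⟩ := cov1 h2 _ hz
    rw [vA y, zero_comp] at hy
    exact hy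
  obtain ⟨ν, hν⟩ := con2 h4 μ haμ
  have hwv : w ≫ ν = 𝟙 Z₁ := by
    have hz : q ≫ (w ≫ ν - 𝟙 Z₁) = 0 := by
      rw [comp_sub, ← assoc, hw1, assoc, ← hν, hG8, comp_id, sub_self]
    obtain ⟨g, hg⟩ := con3 hTu _ hz
    rw [vC g, comp_zero] at hg
    exact sub_eq_zero.mp hg
  have hbw : μ ≫ w = s := by
    have hxr : (μ ≫ w - s) ≫ r = 0 := by
      rw [sub_comp, assoc, ← hw2, ← assoc, ← hμ1, assoc, z23 h1, comp_zero, z23 h4, sub_self]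
    obtain ⟨lam, hlam⟩ := cov3 h4 _ hxr
    have hlm : lam ≫ μ = 0 := by
      have h0 : (μ ≫ w - s) ≫ ν = 0 := by
        rw [sub_comp, assoc, hwv, comp_id, ← hν, sub_self]
      rw [hlam] at h0
      rw [hν, ← assoc]
      exact h0
    obtain ⟨x₁, hx₁⟩ := cov2 h1 (lam ≫ φ)
      (by rw [assoc, hμ1, ← assoc, hlm, zero_comp])
    have hzz : (lam - x₁ ≫ abar) ≫ φ = 0 := by
      rw [sub_comp, hx₁, assoc, ← ha1, sub_self]
    obtain ⟨z₁, hz₁⟩ := cov1 hT3 _ hzz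
    have hchi : desh χ ≫ μ = desh γ' := by rw [← hμ2, desh_natural]
    have hz₁γ : z₁ ≫ desh γ' = 0 := by
      have hl : lam = x₁ ≫ abar + z₁ ≫ desh χ := by
        rw [← sub_eq_iff_eq_add']; exact hz₁
      have h0 : lam ≫ μ = x₁ ≫ (abar ≫ μ) + z₁ ≫ (desh χ ≫ μ) := by
        rw [hl, add_comp, assoc, assoc]
      rw [hlm, haμ, comp_zero, zero_add, hchi] at h0
      exact h0.symm
    obtain ⟨y₀, hy₀⟩ := cov1' h2 _ hz₁γ
    have hbj : (β'⟦(-1:ℤ)⟧' ≫ desh χ) = desh γ ≫ abar := by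
      rw [← desh_precomp, ← ha2, desh_natural]
    have hl : lam = x₁ ≫ abar + y₀ ≫ (desh γ ≫ abar) := by
      rw [← hbj, ← assoc, ← hy₀, ← sub_eq_iff_eq_add']
      exact hz₁
    have h0 : (μ ≫ w - s) = 0 := by
      rw [hlam, hl, add_comp, assoc, assoc, assoc, z12 h4,
        comp_zero, comp_zero, comp_zero, add_zero]
    exact sub_eq_zero.mp h0
  have hXZ : ∀ f : X⟦(1:ℤ)⟧ ⟶ Z, f = 0 := midCov h2 vC vF
  have hXW : ∀ x : X⟦(1:ℤ)⟧ ⟶ W, ∃ ξ : X⟦(1:ℤ)⟧ ⟶ X, x = ξ ≫ abar := by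
    intro x
    obtain ⟨ξ, hξ⟩ := cov2 h1 (x ≫ φ) (by rw [assoc]; exact hXZ _)
    refine ⟨ξ, ?_⟩
    have hzz : (x - ξ ≫ abar) ≫ φ = 0 := by
      rw [sub_comp, hξ, assoc, ← ha1, sub_self]
    obtain ⟨ζ, hζ⟩ := cov1 hT3 _ hzz
    rw [vD ζ, zero_comp] at hζ
    exact sub_eq_zero.mp hζ
  have hXZm : ∀ g : X ⟶ Z⟦(-1:ℤ)⟧, g = 0 :=
    homZero_mid_cov (T := (Triangle.shiftFunctor D (-1)).obj (Triangle.mk α' β' γ'))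
      (Triangle.shift_distinguished _ h2 (-1)) (U := X) vG vA
  have hXv : ∀ f : X⟦(1:ℤ)⟧ ⟶ v, f = 0 := by
    intro f
    have hx₀a : (f ≫ r) ≫ abar⟦(1:ℤ)⟧' = 0 := by
      rw [assoc, z31 h4, comp_zero]
    set x₀' := (shiftFunctor D (1:ℤ)).preimage (f ≫ r) with hx₀'
    have hmap : (shiftFunctor D (1:ℤ)).map x₀' = f ≫ r := Functor.map_preimage _ _
    have hza : x₀' ≫ abar = 0 := by
      have h0 : (shiftFunctor D (1:ℤ)).map (x₀' ≫ abar) = 0 := by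
        rw [Functor.map_comp, hmap]; exact hx₀a
      exact (shiftFunctor D (1:ℤ)).map_eq_zero_iff.mp h0
    have hzα : x₀' ≫ α = 0 := by rw [ha1, ← assoc, hza, zero_comp]
    obtain ⟨ξ₂, hξ₂⟩ := cov1 h1 _ hzα
    rw [hXZm ξ₂, zero_comp] at hξ₂
    have hfr : f ≫ r = 0 := by rw [← hmap, hξ₂, Functor.map_zero]
    obtain ⟨g, hg⟩ := cov3 h4 f hfr
    obtain ⟨ξ, hξ⟩ := hXW g
    rw [hg, hξ, assoc, z12 h4, comp_zero]
  have hvw : ν ≫ w = 𝟙 v := by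
    have hz : s ≫ (ν ≫ w - 𝟙 v) = 0 := by
      rw [comp_sub, ← assoc, ← hν, hbw, comp_id, sub_self]
    obtain ⟨g, hg⟩ := con3 h4 _ hz
    rw [hXv g, comp_zero] at hg
    exact sub_eq_zero.mp hg
  have hwiso : IsIso w := ⟨ν, hwv, hvw⟩
  have hC0 : Triangle.mk abar μ (α' ≫ γ) ∈ distTriang D := by
    refine isomorphic_distinguished _ h4 _ ?_
    refine Triangle.isoMk _ _ (Iso.refl _) (Iso.refl _) (@asIso _ _ _ _ w hwiso) ?_ ?_ ?_
    · dsimp [Triangle.mk]; rw [id_comp, comp_id]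
    · dsimp [Triangle.mk]; rw [id_comp, hbw]
    · dsimp [Triangle.mk]; rw [CategoryTheory.Functor.map_id, comp_id, hw2]
  exact ⟨W, ⟨abar, μ, α' ≫ γ, hC0⟩, ⟨φ, β ≫ β', χ, hT3⟩⟩

lemma shape2 {X Y Z X₁ X₂ : D}
    {a : X ⟶ Y} {b : Y ⟶ Z} {c : Z ⟶ X⟦(1:ℤ)⟧}
    (h1 : Triangle.mk a b c ∈ distTriang D)
    {d : X₁ ⟶ X} {e : X ⟶ X₂} {f : X₂ ⟶ X₁⟦(1:ℤ)⟧}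
    (h2 : Triangle.mk d e f ∈ distTriang D)
    (v1 : ∀ g : X₁⟦(1:ℤ)⟧ ⟶ Z, g = 0)
    (v3 : ∀ g : X₂ ⟶ Z⟦(-1:ℤ)⟧, g = 0)
    (v4 : ∀ g : X₁ ⟶ Z⟦(-1:ℤ)⟧, g = 0)
    (v5 : ∀ g : X₁⟦(1:ℤ)⟧ ⟶ Z⟦(-1:ℤ)⟧, g = 0)
    (v6 : ∀ g : X₁⟦(1:ℤ)⟧ ⟶ X₂, g = 0)
    (v7 : ∀ g : X⟦(-1:ℤ)⟧⟦(1:ℤ)⟧ ⟶ Z⟦(-1:ℤ)⟧, g = 0) :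
    ∃ C, IsExt X₁ Y C ∧ IsExt X₂ C Z := by
  obtain ⟨Qd, φd, χd, hT3⟩ := distinguished_cocone_triangle (d ≫ a)
  obtain ⟨μd, hμ1, hμ2⟩ := complete₀ h2 hT3 (𝟙 X₁) a (by rw [id_comp])
  rw [CategoryTheory.Functor.map_id, comp_id] at hμ2
  obtain ⟨bbar, hb1, hb2⟩ := complete₀ hT3 h1 d (𝟙 Y) (by rw [comp_id])
  rw [id_comp] at hb1
  obtain ⟨ud, pd, qd, hTu⟩ := distinguished_cocone_triangle₂ (c ≫ e⟦(1:ℤ)⟧')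
  obtain ⟨md, hmd1, hmd2⟩ := complete₂ h1 hTu e (𝟙 Z) (by rw [id_comp])
  rw [comp_id] at hmd2
  obtain ⟨mhat, hmhat⟩ := con2 hT3 md (by rw [assoc, hmd1, ← assoc, z12 h2, zero_comp])
  have hG7 : mhat ≫ qd = bbar := by
    have hz : φd ≫ (mhat ≫ qd - bbar) = 0 := by
      rw [comp_sub, ← assoc, ← hmhat, ← hmd2, hb1, sub_self]
    obtain ⟨y, hy⟩ := con3 hT3 _ hz
    rw [v1 y, comp_zero] at hy
    exact sub_eq_zero.mp hy
  have hX1ud : ∀ g : X₁⟦(1:ℤ)⟧ ⟶ ud, g = 0 := midCov hTu v6 v1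
  have hG8 : μd ≫ mhat = pd := by
    have hz : e ≫ (μd ≫ mhat - pd) = 0 := by
      rw [comp_sub, ← assoc, hμ1, assoc, ← hmhat, hmd1, sub_self]
    obtain ⟨y, hy⟩ := con3 h2 _ hz
    rw [hX1ud y, comp_zero] at hy
    exact sub_eq_zero.mp hy
  obtain ⟨vd, sd, rd, h4⟩ := distinguished_cocone_triangle₁ bbar
  obtain ⟨wd, hw1, hw2⟩ := complete₁ h4 hTu mhat (𝟙 Z) (by rw [comp_id]; exact hG7.symm)
  rw [id_comp] at hw2
  have hμb : μd ≫ bbar = 0 := by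
    have hz : e ≫ (μd ≫ bbar) = 0 := by
      rw [← assoc, hμ1, assoc, hb1, z12 h1]
    obtain ⟨y, hy⟩ := con3 h2 _ hz
    rw [v1 y, comp_zero] at hy
    exact hy
  obtain ⟨νd, hν⟩ := cov2 h4 μd hμb
  have hvw : νd ≫ wd = 𝟙 X₂ := by
    have hz : (νd ≫ wd - 𝟙 X₂) ≫ pd = 0 := by
      rw [sub_comp, assoc, ← hw1, ← assoc, ← hν, hG8, id_comp, sub_self]
    obtain ⟨y, hy⟩ := cov1 hTu _ hz
    rw [v3 y, zero_comp] at hy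
    exact sub_eq_zero.mp hy
  have hdwd : desh rd ≫ wd = desh c ≫ e := by
    have h0 : desh rd ≫ wd = desh (rd ≫ wd⟦(1:ℤ)⟧') := by rw [desh_natural]
    rw [h0, hw2, desh_natural]
  have hbw : wd ≫ μd = sd := by
    have hfirst : desh rd ≫ (wd ≫ μd) = 0 := by
      rw [← assoc, hdwd, assoc, hμ1, ← assoc, zdesh h1, zero_comp]
    have hdz : desh rd ≫ (wd ≫ μd - sd) = 0 := by
      rw [comp_sub, hfirst, zdesh h4, sub_self]
    obtain ⟨lamd, hlam⟩ := con1 h4 _ hdz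
    have hml : μd ≫ lamd = 0 := by
      have h0 : νd ≫ (wd ≫ μd - sd) = 0 := by
        rw [comp_sub, ← assoc, hvw, id_comp, ← hν, sub_self]
      rw [hlam] at h0
      rw [hν, assoc]
      exact h0
    obtain ⟨x₁, hx₁⟩ := con2 h1 (φd ≫ lamd)
      (by rw [← assoc, ← hμ1, assoc, hml, comp_zero])
    have hzz : φd ≫ (lamd - bbar ≫ x₁) = 0 := by
      rw [comp_sub, hx₁, ← assoc, hb1, sub_self]
    obtain ⟨z₁, hz₁⟩ := con3 hT3 _ hzz
    have hlz : lamd = bbar ≫ x₁ + χd ≫ z₁ := by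
      rw [← sub_eq_iff_eq_add']; exact hz₁
    have hfz : f ≫ z₁ = 0 := by
      have h0 : μd ≫ lamd = (μd ≫ bbar) ≫ x₁ + (μd ≫ χd) ≫ z₁ := by
        rw [hlz, comp_add, assoc, assoc]
      rw [hml, hμb, zero_comp, zero_add, ← hμ2] at h0
      exact h0.symm
    obtain ⟨y₀, hy₀⟩ := con4 h2 z₁ hfz
    have hlz2 : lamd = bbar ≫ (x₁ + c ≫ y₀) := by
      rw [hlz, hy₀, ← assoc, hb2, comp_add, assoc]
    have h0 : wd ≫ μd - sd = 0 := by
      rw [hlam, hlz2, ← assoc, z12 h4, zero_comp]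
    exact sub_eq_zero.mp h0
  have hXZm : ∀ g : X ⟶ Z⟦(-1:ℤ)⟧, g = 0 := midCon h2 v4 v3
  have hQdZm : ∀ x : Qd ⟶ Z⟦(-1:ℤ)⟧, ∃ ξ : Z ⟶ Z⟦(-1:ℤ)⟧, x = bbar ≫ ξ := by
    intro x
    obtain ⟨ξ, hξ⟩ := con2 h1 (φd ≫ x) (by rw [← assoc]; exact hXZm _)
    refine ⟨ξ, ?_⟩
    have hz : φd ≫ (x - bbar ≫ ξ) = 0 := by
      rw [comp_sub, hξ, ← assoc, hb1, sub_self]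
    obtain ⟨ζ, hζ⟩ := con3 hT3 _ hz
    rw [v5 ζ, comp_zero] at hζ
    exact sub_eq_zero.mp hζ
  have hvdZm : ∀ g : vd ⟶ Z⟦(-1:ℤ)⟧, g = 0 := by
    intro g
    have h00 : bbar⟦(-1:ℤ)⟧' ≫ desh rd = 0 := by
      rw [← desh_precomp, z23 h4]
      simp [desh]
    have hbg : b⟦(-1:ℤ)⟧' ≫ (desh rd ≫ g) = 0 := by
      rw [← hb1, Functor.map_comp, assoc, ← assoc (bbar⟦(-1:ℤ)⟧'), h00, zero_comp, comp_zero]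
    have hsm : ((Triangle.shiftFunctor D (-1)).obj (Triangle.mk a b c)).mor₂ ≫
        (desh rd ≫ g) = 0 := by
      exact (Linear.units_smul_comp _ _ _).trans ((congrArg (HSMul.hSMul _) hbg).trans (smul_zero ((-1:ℤ).negOnePow)))
    obtain ⟨g₂, hg₂⟩ := Triangle.yoneda_exact₃ _ (Triangle.shift_distinguished _ h1 (-1)) _ hsm
    replace hg₂ : desh rd ≫ g = 0 := hg₂.trans ((congrArg (CategoryStruct.comp _) (v7 g₂)).trans comp_zero)
    obtain ⟨g₃, hg₃⟩ := con1 h4 g hg₂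
    obtain ⟨ξ, hξ⟩ := hQdZm g₃
    rw [hg₃, hξ, ← assoc, z12 h4, zero_comp]
  have hwd2 : wd ≫ νd = 𝟙 vd := by
    have hz : (wd ≫ νd - 𝟙 vd) ≫ sd = 0 := by
      rw [sub_comp, assoc, ← hν, hbw, id_comp, sub_self]
    obtain ⟨y, hy⟩ := cov1 h4 _ hz
    rw [hvdZm y, zero_comp] at hy
    exact sub_eq_zero.mp hy
  have hνiso : IsIso νd := ⟨wd, hvw, hwd2⟩
  have hC0 : Triangle.mk μd bbar (c ≫ e⟦(1:ℤ)⟧') ∈ distTriang D := by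
    refine isomorphic_distinguished _ h4 _ ?_
    refine Triangle.isoMk _ _ (@asIso _ _ _ _ νd hνiso) (Iso.refl _) (Iso.refl _) ?_ ?_ ?_
    · dsimp [Triangle.mk]; rw [comp_id]; exact hν
    · dsimp [Triangle.mk]; rw [id_comp, comp_id]
    · dsimp [Triangle.mk]
      rw [id_comp, ← hw2, assoc, ← (shiftFunctor D (1:ℤ)).map_comp, hwd2,
        CategoryTheory.Functor.map_id, comp_id]
  exact ⟨Qd, ⟨d ≫ a, φd, χd, hT3⟩, ⟨μd, bbar, c ≫ e⟦(1:ℤ)⟧', hC0⟩⟩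


/-! further auxiliary lemmas -/

lemma isExt_of_mk {A E B : D} {f : A ⟶ E} {g : E ⟶ B} {h : B ⟶ A⟦(1:ℤ)⟧}
    (hT : Triangle.mk f g h ∈ distTriang D) : IsExt A E B := ⟨f, g, h, hT⟩

lemma isExt_iso {A A' E E' B B' : D} (eA : A ≅ A') (eE : E ≅ E') (eB : B ≅ B')
    (hE : IsExt A E B) : IsExt A' E' B' := by
  obtain ⟨f, g, h, hT⟩ := hE
  refine ⟨eA.inv ≫ f ≫ eE.hom, eE.inv ≫ g ≫ eB.hom, eB.inv ≫ h ≫ eA.hom⟦(1:ℤ)⟧', ?_⟩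
  refine isomorphic_distinguished _ hT _ ?_
  exact Triangle.isoMk _ _ eA.symm eE.symm eB.symm (by dsimp only [Triangle.mk]; simp) (by dsimp only [Triangle.mk]; simp)
    (by dsimp only [Triangle.mk]; rw [assoc, assoc, ← Functor.map_comp]; simp)

lemma isExt_shift {A E B : D} (hE : IsExt A E B) (n : ℤ) :
    IsExt (A⟦n⟧) (E⟦n⟧) (B⟦n⟧) := by
  obtain ⟨f, g, h, hT⟩ := hE
  exact ⟨_, _, _, Triangle.shift_distinguished _ hT n⟩

lemma isZero_shift' {P : D} (h : IsZero P) (n : ℤ) : IsZero (P⟦n⟧) := by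
  rw [IsZero.iff_id_eq_zero] at h ⊢
  rw [← CategoryTheory.Functor.map_id, h, Functor.map_zero]

noncomputable def shZero (P : D) : P ≅ P⟦(0:ℤ)⟧ := ((shiftFunctorZero D ℤ).app P).symm

noncomputable def shAdd (P : D) (i j k : ℤ) (h : i + j = k) : P⟦i⟧⟦j⟧ ≅ P⟦k⟧ :=
  ((shiftFunctorAdd' D i j k h).app P).symm

lemma heartNeg' {H : Set D} (hA : IsHeart H) {P Q : D} (hP : P ∈ H) (hQ : Q ∈ H)
    (m n : ℤ) (h : n < m) {A' B' : D} (eA : A' ≅ P⟦m⟧) (eB : B' ≅ Q⟦n⟧) :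
    ∀ f : A' ⟶ B', f = 0 :=
  zeroHomTransport eA.symm eB.symm (shiftHomZero (hA.negHom P hP Q hQ) m n h)

lemma torsion_zero_mem {H T₀ F₀ : Set D} (hTP : IsTorsionPair H T₀ F₀) {O₀ : D}
    (hO₀ : IsZero O₀) (hO₀H : O₀ ∈ H)
    (hv1 : ∀ t ∈ T₀, ∀ b ∈ F₀, ∀ y : t ⟶ b⟦(-1:ℤ)⟧, y = 0)
    (hv2 : ∀ t ∈ T₀, ∀ b ∈ F₀, ∀ y : t⟦(1:ℤ)⟧ ⟶ b, y = 0) :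
    (∀ O : D, IsZero O → O ∈ T₀) ∧ (∀ O : D, IsZero O → O ∈ F₀) := by
  obtain ⟨t, ht, b, hb, f, g, hcon, hT⟩ := hTP.ses O₀ hO₀H
  have hf : f = 0 := hO₀.eq_of_tgt _ _
  obtain ⟨y, hy⟩ := cov1 hT (𝟙 t) (by rw [id_comp, hf])
  rw [hv1 t ht b hb y, zero_comp] at hy
  have hzt : IsZero t := by rw [IsZero.iff_id_eq_zero]; exact hy
  have hg : g = 0 := hO₀.eq_of_src _ _
  obtain ⟨y2, hy2⟩ := con3 hT (𝟙 b) (by rw [hg, zero_comp])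
  rw [hv2 t ht b hb y2, comp_zero] at hy2
  have hzb : IsZero b := by rw [IsZero.iff_id_eq_zero]; exact hy2
  exact ⟨fun O hO => hTP.isoClosedT ht (hzt.iso hO), fun O hO => hTP.isoClosedF hb (hzb.iso hO)⟩

lemma F_sub_tilted {H T₀ F₀ : Set D} (hA : IsHeart H) (hTP : IsTorsionPair H T₀ F₀)
    {f : D} (hf : f ∈ F₀) : f ∈ tilted T₀ F₀ := by
  have hz := (torsion_zero_mem hTP (Limits.isZero_zero D) (hA.zero_mem (Limits.isZero_zero D))
    (fun t ht b hb => heartNeg' hA (hTP.subsetT ht) (hTP.subsetF hb) 0 (-1)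
      (by norm_num) (shZero t) (Iso.refl _))
    (fun t ht b hb => heartNeg' hA (hTP.subsetT ht) (hTP.subsetF hb) 1 0
      (by norm_num) (Iso.refl _) (shZero b))).1
  refine ⟨f, hf, (0 : D), ⟨(0 : D), hz _ (Limits.isZero_zero D),
    ⟨(Limits.isZero_zero D).iso (isZero_shift' (Limits.isZero_zero D) (-1))⟩⟩, ?_⟩
  exact ⟨𝟙 f, 0, 0, contractible_distinguished f⟩

/-- negative maps from a heart object into a tilted-heart object vanish -/
lemma tilted_neg {H T₀ F₀ : Set D} (hA : IsHeart H) (hTP : IsTorsionPair H T₀ F₀) {P M : D}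
    (hP : P ∈ H) (hM : M ∈ tilted T₀ F₀) :
    (∀ f : P ⟶ M⟦(-1:ℤ)⟧, f = 0) ∧ (∀ f : P⟦(1:ℤ)⟧ ⟶ M, f = 0) := by
  obtain ⟨g, hg, s, ⟨u, hu, ⟨es⟩⟩, m1, m2, m3, hT⟩ := hM
  have hgA : g ∈ H := hTP.subsetF hg
  have huA : u ∈ H := hTP.subsetT hu
  constructor
  · have h₁ : ∀ f : P ⟶ g⟦(-1:ℤ)⟧, f = 0 :=
      heartNeg' hA hP hgA 0 (-1) (by norm_num) (shZero P) (Iso.refl _)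
    have h₃ : ∀ f : P ⟶ s⟦(-1:ℤ)⟧, f = 0 := by
      have h' : ∀ f : P ⟶ u⟦(-2:ℤ)⟧, f = 0 :=
        heartNeg' hA hP huA 0 (-2) (by norm_num) (shZero P) (Iso.refl _)
      exact zeroHomTransport (Iso.refl P)
        ((shAdd u (-1) (-1) (-2) (by norm_num)).symm ≪≫
          ((shiftFunctor D (-1:ℤ)).mapIso es).symm) h'
    exact fun f => homZero_mid_cov
      (T := (Triangle.shiftFunctor D (-1)).obj (Triangle.mk m1 m2 m3))
      (Triangle.shift_distinguished _ hT (-1)) h₁ h₃ f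
  · have h₁ : ∀ f : P⟦(1:ℤ)⟧ ⟶ g, f = 0 :=
      heartNeg' hA hP hgA 1 0 (by norm_num) (Iso.refl _) (shZero g)
    have h₃ : ∀ f : P⟦(1:ℤ)⟧ ⟶ s, f = 0 := by
      have h' : ∀ f : P⟦(1:ℤ)⟧ ⟶ u⟦(-1:ℤ)⟧, f = 0 :=
        heartNeg' hA hP huA 1 (-1) (by norm_num) (Iso.refl _) (Iso.refl _)
      exact zeroHomTransport (Iso.refl _) es.symm h'
    exact fun f => midCov hT h₁ h₃ f

lemma mem_free_of_homzero {H T₀ F₀ : Set D} (hTP : IsTorsionPair H T₀ F₀) {M : D}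
    (hM : M ∈ H) (hzero : ∀ t ∈ T₀, ∀ φ : t ⟶ M, φ = 0)
    (hvanish : ∀ t ∈ T₀, ∀ b ∈ F₀, ∀ y : t ⟶ b⟦(-1:ℤ)⟧, y = 0) : M ∈ F₀ := by
  obtain ⟨t, ht, b, hb, f, g, hcon, hT⟩ := hTP.ses M hM
  have hf : f = 0 := hzero t ht f
  obtain ⟨y, hy⟩ := cov1 hT (𝟙 t) (by rw [id_comp, hf])
  rw [hvanish t ht b hb y, zero_comp] at hy
  have hzt : IsZero t := by rw [IsZero.iff_id_eq_zero]; exact hy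
  have hiso : IsIso g := (Triangle.isZero₁_iff_isIso₂ _ hT).1 hzt
  exact hTP.isoClosedF hb (asIso g).symm

end Aux

/-- composition of left tilts. Let `A` be the heart of a bounded
t-structure of a triangulated category, let `(T, F)` be a torsion pair in `A`, and
let `(T', F')` be a torsion pair in the tilted heart `A* = ⟨F, T[-1]⟩`.  If
`T' ⊆ F`, then `(T ⋆ T', F ∩ F')` is a torsion pair in `A` and the left tilt
`A** = ⟨F', T'[-1]⟩` of `A*` equals the left tilt of `A` with respect to the
torsion pair `(T ⋆ T', F ∩ F')`. -/
theorem tilt_comp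
    (A : Set D) (hA : IsHeart A) (T F : Set D) (hTF : IsTorsionPair A T F)
    (T' F' : Set D) (hTF' : IsTorsionPair (tilted T F) T' F') (hsub : T' ⊆ F) :
    IsTorsionPair A (gabriel T T') (F ∩ F') ∧
      tilted T' F' = tilted (gabriel T T') (F ∩ F') := by
  have hT'A : ∀ {x : D}, x ∈ T' → x ∈ A := fun hx => hTF.subsetF (hsub hx)
  have hTA : ∀ {x : D}, x ∈ T → x ∈ A := fun hx => hTF.subsetT hx
  have hFA : ∀ {x : D}, x ∈ F → x ∈ A := fun hx => hTF.subsetF hx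
  have hmemF' : ∀ {M : D}, M ∈ tilted T F → (∀ t'' ∈ T', ∀ φ : t'' ⟶ M, φ = 0) → M ∈ F' :=
    fun hM hz => mem_free_of_homzero hTF' hM hz
      (fun t'' ht'' b' hb' => (tilted_neg hA hTF (hT'A ht'') (hTF'.subsetF hb')).1)
  have part1 : IsTorsionPair A (gabriel T T') (F ∩ F') := by
    refine ⟨?_, ?_, ?_, ?_, ?_, ?_⟩
    · rintro E ⟨t, ht, t', ht', hExt⟩
      exact hA.extClosed (hTA ht) (hT'A ht') hExt
    · rintro E ⟨hEF, _⟩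
      exact hFA hEF
    · rintro X Y ⟨t, ht, t', ht', hExt⟩ e
      exact ⟨t, ht, t', ht', isExt_iso (Iso.refl _) e (Iso.refl _) hExt⟩
    · rintro X Y ⟨h1, h2⟩ e
      exact ⟨hTF.isoClosedF h1 e, hTF'.isoClosedF h2 e⟩
    · rintro u ⟨t, ht, t', ht', f, g, hcon, hTg⟩ f₀ ⟨hfF, hfF'⟩ φ
      obtain ⟨ψ, hψ⟩ := con2 hTg φ (hTF.hom_zero t ht f₀ hfF _)
      rw [hψ, hTF'.hom_zero t' ht' f₀ hfF' ψ, comp_zero]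
    · intro E hE
      obtain ⟨t, ht, f, hf, hExt1⟩ := hTF.ses E hE
      obtain ⟨α, β, γ, hT1⟩ := hExt1
      obtain ⟨t', ht', b, hb, hExt2⟩ := hTF'.ses f (F_sub_tilted hA hTF hf)
      obtain ⟨α', β', γ', hT2⟩ := hExt2
      have htA := hTA ht
      have ht'A := hT'A ht'
      obtain ⟨g0, hg0, s0, ⟨u0, hu0, ⟨es0⟩⟩, m1, m2, m3, hTb⟩ := hTF'.subsetF hb
      have hfs0 : ∀ y : f ⟶ s0, y = 0 :=
        zeroHomTransport (Iso.refl _) es0.symm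
          (heartNeg' hA (hFA hf) (hTA hu0) 0 (-1) (by norm_num) (shZero f) (Iso.refl _))
      have hm2 : m2 = 0 := by
        obtain ⟨y, hy⟩ := con3 hT2 m2 (hfs0 _)
        have hy0 : y = 0 := zeroHomTransport (Iso.refl _) es0.symm
          (heartNeg' hA ht'A (hTA hu0) 1 (-1) (by norm_num) (Iso.refl _) (Iso.refl _)) y
        rw [hy, hy0, comp_zero]
      have hs0z : IsZero s0 := by
        obtain ⟨y, hy⟩ := con3 hTb (𝟙 s0) (by rw [hm2, zero_comp])
        have hy0 : y = 0 := zeroHomTransport (Iso.refl _) es0.symm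
          (heartNeg' hA (hFA hg0) (hTA hu0) 1 (-1) (by norm_num) (Iso.refl _) (Iso.refl _)) y
        rw [IsZero.iff_id_eq_zero, hy, hy0, comp_zero]
      have hbin : IsIso m1 := (Triangle.isZero₃_iff_isIso₁ _ hTb).1 hs0z
      have hbF : b ∈ F := hTF.isoClosedF hg0 (asIso m1)
      have hbA : b ∈ A := hFA hbF
      obtain ⟨W, hW1, hW2⟩ := shape1 hT1 hT2
        (heartNeg' hA htA hbA 0 (-1) (by norm_num) (shZero t) (Iso.refl _))
        (heartNeg' hA ht'A hbA 0 (-1) (by norm_num) (shZero t') (Iso.refl _))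
        (heartNeg' hA htA ht'A 1 0 (by norm_num) (Iso.refl _) (shZero t'))
        (heartNeg' hA htA hbA 1 (-1) (by norm_num) (Iso.refl _) (Iso.refl _))
        (heartNeg' hA htA hbA 1 0 (by norm_num) (Iso.refl _) (shZero b))
        (heartNeg' hA htA ht'A 0 (-1) (by norm_num) (shZero t) (Iso.refl _))
      exact ⟨W, ⟨t, ht, t', ht', hW1⟩, b, ⟨hbF, hb⟩, hW2⟩
  refine ⟨part1, ?_⟩
  apply Set.eq_of_subset_of_subset
  · rintro E ⟨f', hf', s', ⟨t'', ht'', ⟨es'⟩⟩, hExtE⟩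
    obtain ⟨a0, b0, c0, hTmain⟩ := isExt_iso (Iso.refl _) (Iso.refl _) es' hExtE
    obtain ⟨g', hg', s₀, ⟨t₀, ht₀, ⟨es₀⟩⟩, hExtf'⟩ := hTF'.subsetF hf'
    obtain ⟨d0, e0, f0, hTsub⟩ := isExt_iso (Iso.refl _) (Iso.refl _) es₀ hExtf'
    have hg'A := hFA hg'
    have ht''A := hT'A ht''
    have ht₀A := hTA ht₀
    have v3 : ∀ x : t₀⟦(-1:ℤ)⟧ ⟶ t''⟦(-1:ℤ)⟧⟦(-1:ℤ)⟧, x = 0 :=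
      heartNeg' hA ht₀A ht''A (-1) (-2) (by norm_num) (Iso.refl _)
        (shAdd t'' (-1) (-1) (-2) (by norm_num))
    have v4 : ∀ x : g' ⟶ t''⟦(-1:ℤ)⟧⟦(-1:ℤ)⟧, x = 0 :=
      heartNeg' hA hg'A ht''A 0 (-2) (by norm_num) (shZero g')
        (shAdd t'' (-1) (-1) (-2) (by norm_num))
    have v7 : ∀ x : f'⟦(-1:ℤ)⟧⟦(1:ℤ)⟧ ⟶ t''⟦(-1:ℤ)⟧⟦(-1:ℤ)⟧, x = 0 := by
      have hmid : ∀ x : f' ⟶ t''⟦(-1:ℤ)⟧⟦(-1:ℤ)⟧, x = 0 := midCon hTsub v4 v3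
      exact zeroHomTransport (shZero f' ≪≫ (shAdd f' (-1) 1 0 (by norm_num)).symm)
        (Iso.refl _) hmid
    obtain ⟨C, hC1, hC2⟩ := shape2 hTmain hTsub
      (heartNeg' hA hg'A ht''A 1 (-1) (by norm_num) (Iso.refl _) (Iso.refl _))
      v3 v4
      (heartNeg' hA hg'A ht''A 1 (-2) (by norm_num) (Iso.refl _)
        (shAdd t'' (-1) (-1) (-2) (by norm_num)))
      (heartNeg' hA hg'A ht₀A 1 (-1) (by norm_num) (Iso.refl _) (Iso.refl _))
      v7
    have hC1' : IsExt t₀ (C⟦(1:ℤ)⟧) t'' :=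
      isExt_iso (shAdd t₀ (-1) 1 0 (by norm_num) ≪≫ (shZero t₀).symm) (Iso.refl _)
        (shAdd t'' (-1) 1 0 (by norm_num) ≪≫ (shZero t'').symm) (isExt_shift hC2 1)
    have hg'F' : g' ∈ F' := by
      refine hmemF' (F_sub_tilted hA hTF hg') ?_
      intro t₁ ht₁ x
      obtain ⟨y, hy⟩ := cov1 hTsub x (hTF'.hom_zero t₁ ht₁ f' hf' _)
      have hy0 : y = 0 := heartNeg' hA (hT'A ht₁) ht₀A 0 (-2) (by norm_num) (shZero t₁)
        (shAdd t₀ (-1) (-1) (-2) (by norm_num)) y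
      rw [hy, hy0, zero_comp]
    exact ⟨g', ⟨hg', hg'F'⟩, C, ⟨C⟦(1:ℤ)⟧, ⟨t₀, ht₀, t'', ht'', hC1'⟩,
      ⟨(shAdd C 1 (-1) 0 (by norm_num) ≪≫ (shZero C).symm).symm⟩⟩, hC1⟩
  · rintro E ⟨g, ⟨hgF, hgF'⟩, s, ⟨u, hu, ⟨es⟩⟩, hExtE⟩
    obtain ⟨t, ht, t', ht', hExtU⟩ := hu
    obtain ⟨a0, b0, c0, hTmain⟩ := isExt_iso (Iso.refl _) (Iso.refl _) es hExtE
    obtain ⟨α', β', γ', hTsub⟩ := isExt_shift hExtU (-1)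
    have hgA := hFA hgF
    have htA := hTA ht
    have ht'A := hT'A ht'
    obtain ⟨w, hw1, hw2⟩ := shape1 hTmain hTsub
      (heartNeg' hA hgA ht'A 0 (-2) (by norm_num) (shZero g)
        (shAdd t' (-1) (-1) (-2) (by norm_num)))
      (heartNeg' hA htA ht'A (-1) (-2) (by norm_num) (Iso.refl _)
        (shAdd t' (-1) (-1) (-2) (by norm_num)))
      (heartNeg' hA hgA htA 1 (-1) (by norm_num) (Iso.refl _) (Iso.refl _))
      (heartNeg' hA hgA ht'A 1 (-2) (by norm_num) (Iso.refl _)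
        (shAdd t' (-1) (-1) (-2) (by norm_num)))
      (heartNeg' hA hgA ht'A 1 (-1) (by norm_num) (Iso.refl _) (Iso.refl _))
      (heartNeg' hA hgA htA 0 (-2) (by norm_num) (shZero g)
        (shAdd t (-1) (-1) (-2) (by norm_num)))
    have hw1' := hw1
    obtain ⟨aw, bw, cw, hTw⟩ := hw1'
    have hwtil : w ∈ tilted T F := ⟨g, hgF, t⟦(-1:ℤ)⟧, ⟨t, ht, ⟨Iso.refl _⟩⟩, hw1⟩
    have hwF' : w ∈ F' := by
      refine hmemF' hwtil ?_
      intro t₁ ht₁ x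
      have hx : x ≫ bw = 0 :=
        heartNeg' hA (hT'A ht₁) htA 0 (-1) (by norm_num) (shZero t₁) (Iso.refl _) _
      obtain ⟨y, hy⟩ := cov2 hTw x hx
      rw [hy, hTF'.hom_zero t₁ ht₁ g hgF' y, zero_comp]
    exact ⟨w, hwF', t'⟦(-1:ℤ)⟧, ⟨t', ht', ⟨Iso.refl _⟩⟩, hw2⟩


end GreenSeqPaper
end
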